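/- Let (G,σ) be a signed graph, and let (G,σ′) be the signed graph obtained from (G,σ) by changing the sign of a single edge e (i.e., σ′(e) = −σ(e) and σ′ agrees with σ on all other edges). Then ψ(G,σ) − 2 ≤ ψ(G,σ′) ≤ ψ(G,σ) + 2. -/

import Mathlib

open SimpleGraph

/-- A signature on a graph: a symmetric assignment of signs (`1` or `-1`) to pairs of
vertices (only the values on edges are relevant). -/
def IsSignature {V : Type*} (σ : V → V → ℤ) : Prop :=
  (∀ u v, σ u v = σ v u) ∧ (∀ u v, σ u v = 1 ∨ σ u v = -1)

/-- `σ'` is obtained from `σ` by switching a set of vertices: every vertex gets a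
switching value `±1`, and the sign of an edge is multiplied by the values at its ends. -/
def SwitchEquiv {V : Type*} (σ σ' : V → V → ℤ) : Prop :=
  ∃ s : V → ℤ, (∀ v, s v = 1 ∨ s v = -1) ∧ ∀ u v, σ' u v = s u * s v * σ u v

/-- The colour set `M_k`, as a set of integers: `{±1, …, ±n}` if `k = 2n`, and
`{-n, …, -1, 0, 1, …, n}` if `k = 2n+1` (colour `±0` is represented by `0`). -/
def colourSet (k : ℕ) : Set ℤ :=
  if Even k then {i | i ≠ 0 ∧ i.natAbs ≤ k / 2} else {i | i.natAbs ≤ k / 2}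

/-- A proper `k`-colouring of the signed graph `(G, σ)`: colours come from `M_k` and,
for each edge `uv`, `φ u ≠ σ(uv) · φ v`. -/
def IsProperColouring {V : Type*} (G : SimpleGraph V) (σ : V → V → ℤ) (k : ℕ)
    (φ : V → ℤ) : Prop :=
  (∀ v, φ v ∈ colourSet k) ∧ ∀ u v, G.Adj u v → φ u ≠ σ u v * φ v

/-- The sign of an integer for the purpose of switching: `-1` for negative colours,
`1` otherwise. -/
def isgn (x : ℤ) : ℤ := if x < 0 then -1 else 1

/-- The sign of the edge `uv` after switching every vertex whose colour is negative. -/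
def redSign {V : Type*} (σ : V → V → ℤ) (φ : V → ℤ) (u v : V) : ℤ :=
  isgn (φ u) * isgn (φ v) * σ u v

/-- After switching all negatively-coloured vertices and taking absolute values of
colours, there is an edge of `(G, σ)` whose ends get values `i` and `j` and whose
resulting sign is `s`. -/
def HasEdgeType {V : Type*} (G : SimpleGraph V) (σ : V → V → ℤ) (φ : V → ℤ)
    (i j : ℕ) (s : ℤ) : Prop :=
  ∃ u v, G.Adj u v ∧ (φ u).natAbs = i ∧ (φ v).natAbs = j ∧ redSign σ φ u v = s

/-- A complete `k`-colouring of the signed graph `(G, σ)`. -/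
def IsCompleteColouring {V : Type*} (G : SimpleGraph V) (σ : V → V → ℤ) (k : ℕ)
    (φ : V → ℤ) : Prop :=
  IsProperColouring G σ k φ ∧
  (∀ i j : ℕ, (i : ℤ) ∈ colourSet k → (j : ℤ) ∈ colourSet k → i ≠ j →
    HasEdgeType G σ φ i j 1 ∧ HasEdgeType G σ φ i j (-1)) ∧
  (∀ i : ℕ, 1 ≤ i → (i : ℤ) ∈ colourSet k → HasEdgeType G σ φ i i (-1))

/-- Some signed graph equivalent to `(G, σ)` admits a complete `k`-colouring. -/
def AdmitsComplete {V : Type*} (G : SimpleGraph V) (σ : V → V → ℤ) (k : ℕ) : Prop :=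
  ∃ σ', IsSignature σ' ∧ SwitchEquiv σ σ' ∧ ∃ φ, IsCompleteColouring G σ' k φ

/-- The achromatic number of the signed graph `(G, σ)`: the largest `k` such that some
signed graph equivalent to `(G, σ)` admits a complete `k`-colouring. -/
noncomputable def psi {V : Type*} (G : SimpleGraph V) (σ : V → V → ℤ) : ℕ :=
  sSup {k | AdmitsComplete G σ k}

/-- The chromatic number of the signed graph `(G, σ)`: the smallest `k` such that
`(G, σ)` admits a proper `k`-colouring. -/
noncomputable def chi {V : Type*} (G : SimpleGraph V) (σ : V → V → ℤ) : ℕ :=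
  sInf {k | ∃ φ, IsProperColouring G σ k φ}

/- ===================== auxiliary sign lemmas ===================== -/

lemma isgn_cases (z : ℤ) : isgn z = 1 ∨ isgn z = -1 := by unfold isgn; split <;> simp

lemma isgn_mul_natAbs (z : ℤ) : isgn z * (z.natAbs : ℤ) = z := by
  unfold isgn; split
  · rw [neg_one_mul]; omega
  · rw [one_mul]; omega

lemma isgn_pm_mul (t : ℤ) (q : ℕ) (ht : t = 1 ∨ t = -1) (hq : 1 ≤ q) :
    isgn (t * q) = t := by
  unfold isgn; rcases ht with h|h <;> subst h <;> split <;> omega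

lemma natAbs_pm_mul (t : ℤ) (q : ℕ) (ht : t = 1 ∨ t = -1) :
    (t * (q:ℤ)).natAbs = q := by
  rcases ht with h|h <;> subst h <;> simp

lemma isgn_zero : isgn 0 = 1 := by unfold isgn; norm_num

lemma isgn_nonneg (z : ℤ) (h : 0 ≤ z) : isgn z = 1 := by unfold isgn; split <;> omega

lemma isgn_neg' (z : ℤ) (h : z ≠ 0) : isgn (-z) = - isgn z := by
  unfold isgn; split <;> split <;> omega

lemma pm_sq (t : ℤ) (ht : t = 1 ∨ t = -1) : t * t = 1 := by
  rcases ht with h|h <;> subst h <;> norm_num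

lemma redSign_pm {V : Type*} (σ : V → V → ℤ) (φ : V → ℤ) (u v : V)
    (hτ : σ u v = 1 ∨ σ u v = -1) : redSign σ φ u v = 1 ∨ redSign σ φ u v = -1 := by
  unfold redSign
  rcases isgn_cases (φ u) with h1|h1 <;> rcases isgn_cases (φ v) with h2|h2 <;>
    rcases hτ with h3|h3 <;> rw [h1, h2, h3] <;> norm_num

lemma redSign_symm {V : Type*} (σ : V → V → ℤ) (φ : V → ℤ) (u v : V)
    (hσ : σ u v = σ v u) : redSign σ φ u v = redSign σ φ v u := by
  unfold redSign; rw [hσ]; ring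

/-- proper when absolute values differ -/
lemma proper_of_natAbs_ne {x y t : ℤ} (ht : t = 1 ∨ t = -1)
    (h : x.natAbs ≠ y.natAbs) : x ≠ t * y := by
  intro he
  have h2 : x.natAbs = (t*y).natAbs := by rw [he]
  rcases ht with h'|h' <;> subst h' <;> simp at h2 <;> omega

/-- proper when red sign is –1 and the (equal) value is nonzero -/
lemma proper_of_red_neg {V : Type*} {σ : V → V → ℤ} {φ : V → ℤ} {u v : V}
    (ht : σ u v = 1 ∨ σ u v = -1)
    (hred : redSign σ φ u v = -1) (hne : φ u ≠ 0) : φ u ≠ σ u v * φ v := by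
  intro he
  have hv : φ v ≠ 0 := by
    intro h0; rw [h0, mul_zero] at he; exact hne he
  have h1 : isgn (φ u) * (φ u).natAbs = φ u := isgn_mul_natAbs _
  have h2 : isgn (φ v) * (φ v).natAbs = φ v := isgn_mul_natAbs _
  -- from he : φ u = σ u v * φ v, isgn (φ u) = σ u v * isgn (φ v)
  have hs : isgn (φ u) = σ u v * isgn (φ v) := by
    rcases ht with h'|h' <;> rw [h'] at he ⊢
    · rw [one_mul] at he ⊢; rw [he]
    · rw [neg_one_mul] at he ⊢
      rw [he, isgn_neg' _ hv]
  unfold redSign at hred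
  rw [hs] at hred
  rcases isgn_cases (φ v) with h'|h' <;> rcases ht with h''|h'' <;>
    rw [h', h''] at hred <;> norm_num at hred

/-- improper-derived facts: adjacent vertices with equal absolute value -/
lemma red_neg_of_proper {V : Type*} {σ : V → V → ℤ} {φ : V → ℤ} {u v : V}
    (ht : σ u v = 1 ∨ σ u v = -1)
    (hprop : φ u ≠ σ u v * φ v) (habs : (φ u).natAbs = (φ v).natAbs) :
    redSign σ φ u v = -1 ∧ φ u ≠ 0 := by
  have hne : φ u ≠ 0 := by
    intro h0
    have : φ v = 0 := by omega
    rw [this, mul_zero] at hprop; exact hprop h0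
  refine ⟨?_, hne⟩
  rcases redSign_pm σ φ u v ht with h|h
  · exfalso
    apply hprop
    have hv : φ v ≠ 0 := by omega
    unfold redSign at h
    have h1 : isgn (φ u) * (φ u).natAbs = φ u := isgn_mul_natAbs _
    have h2 : isgn (φ v) * (φ v).natAbs = φ v := isgn_mul_natAbs _
    have : isgn (φ u) = σ u v * isgn (φ v) := by
      rcases isgn_cases (φ u) with a1|a1 <;> rcases isgn_cases (φ v) with a2|a2 <;>
        rw [a1, a2] at h ⊢ <;> rcases ht with a3|a3 <;> rw [a3] at h ⊢ <;> omega
    rw [← h1, ← h2, habs, this]; ring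
  · exact h

/- ===================== colourSet bridge ===================== -/

lemma mem_colourSet_iff (k : ℕ) (z : ℤ) :
    z ∈ colourSet k ↔ (z.natAbs ≤ k / 2 ∧ (Even k → z ≠ 0)) := by
  unfold colourSet
  split <;> rename_i h <;> simp [Set.mem_setOf_eq, h] <;> tauto

lemma coe_mem_colourSet_iff (k : ℕ) (i : ℕ) :
    ((i:ℤ) ∈ colourSet k) ↔ (i ≤ k / 2 ∧ (Even k → i ≠ 0)) := by
  rw [mem_colourSet_iff]
  constructor <;> intro ⟨h1, h2⟩ <;> refine ⟨by omega, fun he => ?_⟩ <;>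
    · intro h0; exact (h2 he) (by omega)

/- ===================== HasEdgeType lemmas ===================== -/

lemma hasEdgeType_symm {V : Type*} {G : SimpleGraph V} {σ : V → V → ℤ} {φ : V → ℤ}
    {i j : ℕ} {s : ℤ} (hσ : ∀ u v, σ u v = σ v u)
    (h : HasEdgeType G σ φ i j s) : HasEdgeType G σ φ j i s := by
  obtain ⟨u, v, h1, h2, h3, h4⟩ := h
  exact ⟨v, u, h1.symm, h3, h2, by rw [← redSign_symm σ φ u v (hσ u v)]; exact h4⟩

/-- generic transfer of an edge type to a new colouring/signature that agrees on the
relevant witnesses -/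
lemma hasEdgeType_transfer {V : Type*} {G : SimpleGraph V} {σ σ' : V → V → ℤ}
    {φ φ' : V → ℤ} {i j : ℕ} {s : ℤ}
    (h : HasEdgeType G σ φ i j s)
    (hagree : ∀ u v, G.Adj u v → (φ u).natAbs = i → (φ v).natAbs = j →
      φ' u = φ u ∧ φ' v = φ v ∧ σ' u v = σ u v) :
    HasEdgeType G σ' φ' i j s := by
  obtain ⟨u, v, h1, h2, h3, h4⟩ := h
  obtain ⟨e1, e2, e3⟩ := hagree u v h1 h2 h3
  refine ⟨u, v, h1, by rw [e1]; exact h2, by rw [e2]; exact h3, ?_⟩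
  unfold redSign at h4 ⊢; rw [e1, e2, e3]; exact h4

attribute [local instance] Classical.propDecidable

/- ===================== normalization ===================== -/

lemma natAbs_coe_eq (z : ℤ) : ((z.natAbs : ℤ)).natAbs = z.natAbs := by omega

lemma normalizeColouring {V : Type*} (G : SimpleGraph V) (σ : V → V → ℤ) (k : ℕ)
    (h : AdmitsComplete G σ k) :
    ∃ (τ : V → V → ℤ) (φ : V → ℤ), IsSignature τ ∧ SwitchEquiv σ τ ∧
      (∀ v, 0 ≤ φ v) ∧ IsCompleteColouring G τ k φ := by
  obtain ⟨σ₁, hsig1, ⟨s, hspm, hseq⟩, φ₁, hφprop, hφpairs, hφdiag⟩ := h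
  refine ⟨fun u v => isgn (φ₁ u) * isgn (φ₁ v) * σ₁ u v,
    fun v => ((φ₁ v).natAbs : ℤ), ⟨?_, ?_⟩, ?_, fun v => by positivity, ?_, ?_, ?_⟩
  · intro u v
    show isgn (φ₁ u) * isgn (φ₁ v) * σ₁ u v = isgn (φ₁ v) * isgn (φ₁ u) * σ₁ v u
    rw [hsig1.1 u v]; ring
  · intro u v
    show isgn (φ₁ u) * isgn (φ₁ v) * σ₁ u v = 1 ∨ isgn (φ₁ u) * isgn (φ₁ v) * σ₁ u v = -1
    rcases isgn_cases (φ₁ u) with h1|h1 <;> rcases isgn_cases (φ₁ v) with h2|h2 <;>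
      rcases hsig1.2 u v with h3|h3 <;> rw [h1, h2, h3] <;> norm_num
  · refine ⟨fun v => s v * isgn (φ₁ v), fun v => ?_, fun u v => ?_⟩
    · show s v * isgn (φ₁ v) = 1 ∨ s v * isgn (φ₁ v) = -1
      rcases hspm v with h1|h1 <;> rcases isgn_cases (φ₁ v) with h2|h2 <;>
        rw [h1, h2] <;> norm_num
    · show isgn (φ₁ u) * isgn (φ₁ v) * σ₁ u v
        = (s u * isgn (φ₁ u)) * (s v * isgn (φ₁ v)) * σ u v
      rw [hseq u v]; ring
  · constructor
    · intro v
      rw [mem_colourSet_iff]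
      have := hφprop.1 v
      rw [mem_colourSet_iff] at this
      beta_reduce
      constructor
      · omega
      · intro he h0
        exact (this.2 he) (by omega)
    · intro u v huv heq
      apply hφprop.2 u v huv
      have h1 : isgn (φ₁ u) * ((φ₁ u).natAbs : ℤ) = φ₁ u := isgn_mul_natAbs _
      have h2 : isgn (φ₁ v) * ((φ₁ v).natAbs : ℤ) = φ₁ v := isgn_mul_natAbs _
      have hiu := pm_sq _ (isgn_cases (φ₁ u))
      have heq' : ((φ₁ u).natAbs : ℤ)
          = isgn (φ₁ u) * isgn (φ₁ v) * σ₁ u v * ((φ₁ v).natAbs : ℤ) := heq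
      calc φ₁ u = isgn (φ₁ u) * ((φ₁ u).natAbs : ℤ) := h1.symm
        _ = isgn (φ₁ u) * (isgn (φ₁ u) * isgn (φ₁ v) * σ₁ u v * ((φ₁ v).natAbs : ℤ)) := by
              rw [← heq']
        _ = (isgn (φ₁ u) * isgn (φ₁ u)) * σ₁ u v * (isgn (φ₁ v) * ((φ₁ v).natAbs : ℤ)) := by
              ring
        _ = σ₁ u v * φ₁ v := by rw [hiu, h2, one_mul]
  · intro i j hi hj hij
    have key : ∀ s', HasEdgeType G σ₁ φ₁ i j s' →
        HasEdgeType G (fun u v => isgn (φ₁ u) * isgn (φ₁ v) * σ₁ u v)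
          (fun v => ((φ₁ v).natAbs : ℤ)) i j s' := by
      rintro s' ⟨u, v, e1, e2, e3, e4⟩
      refine ⟨u, v, e1, by beta_reduce; omega, by beta_reduce; omega, ?_⟩
      show isgn ((φ₁ u).natAbs : ℤ) * isgn ((φ₁ v).natAbs : ℤ)
        * (isgn (φ₁ u) * isgn (φ₁ v) * σ₁ u v) = s'
      rw [isgn_nonneg _ (by positivity), isgn_nonneg _ (by positivity)]
      rw [one_mul, one_mul]
      exact e4
    exact ⟨key 1 (hφpairs i j hi hj hij).1, key (-1) (hφpairs i j hi hj hij).2⟩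
  · intro i hi hik
    obtain ⟨u, v, e1, e2, e3, e4⟩ := hφdiag i hi hik
    refine ⟨u, v, e1, by beta_reduce; omega, by beta_reduce; omega, ?_⟩
    show isgn ((φ₁ u).natAbs : ℤ) * isgn ((φ₁ v).natAbs : ℤ)
      * (isgn (φ₁ u) * isgn (φ₁ v) * σ₁ u v) = -1
    rw [isgn_nonneg _ (by positivity), isgn_nonneg _ (by positivity)]
    rw [one_mul, one_mul]
    exact e4

/- ===================== merge lemma ===================== -/

lemma pm_mul_pm {s t : ℤ} (hs : s = 1 ∨ s = -1) (ht : t = 1 ∨ t = -1) :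
    s * t = 1 ∨ s * t = -1 := by
  rcases hs with h|h <;> rcases ht with h'|h' <;> rw [h, h'] <;> norm_num

lemma proper_of_red_neg' {x y t : ℤ} (ht : t = 1 ∨ t = -1)
    (hred : isgn x * isgn y * t = -1) (hx : x ≠ 0) : x ≠ t * y := by
  intro he
  have hy : y ≠ 0 := by
    intro h0; rw [h0, mul_zero] at he; exact hx he
  have hs : isgn x = t * isgn y := by
    rcases ht with h'|h' <;> rw [h'] at he ⊢
    · rw [one_mul] at he ⊢; rw [he]
    · rw [neg_one_mul] at he ⊢
      rw [he, isgn_neg' _ hy]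
  rw [hs] at hred
  rcases isgn_cases y with h'|h' <;> rcases ht with h''|h'' <;>
    rw [h', h''] at hred <;> norm_num at hred

lemma red_neg_of_proper' {x y t : ℤ} (ht : t = 1 ∨ t = -1)
    (hprop : x ≠ t * y) (habs : x.natAbs = y.natAbs) :
    isgn x * isgn y * t = -1 ∧ x ≠ 0 := by
  have hne : x ≠ 0 := by
    intro h0
    have : y = 0 := by omega
    rw [this, mul_zero] at hprop; exact hprop h0
  refine ⟨?_, hne⟩
  have hpm : isgn x * isgn y * t = 1 ∨ isgn x * isgn y * t = -1 := by
    rcases isgn_cases x with h1|h1 <;> rcases isgn_cases y with h2|h2 <;>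
      rcases ht with h3|h3 <;> rw [h1, h2, h3] <;> norm_num
  rcases hpm with h|h
  · exfalso
    apply hprop
    have hy : y ≠ 0 := by omega
    have h1 : isgn x * (x.natAbs : ℤ) = x := isgn_mul_natAbs _
    have h2 : isgn y * (y.natAbs : ℤ) = y := isgn_mul_natAbs _
    have hs : isgn x = t * isgn y := by
      rcases isgn_cases x with a1|a1 <;> rcases isgn_cases y with a2|a2 <;>
        rw [a1, a2] at h ⊢ <;> rcases ht with a3|a3 <;> rw [a3] at h ⊢ <;> omega
    rw [← h1, ← h2, habs, hs]; ring
  · exact h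

lemma isgn_mcol (t : ℤ) (ht : t = 1 ∨ t = -1) (q : ℕ) (hq : 1 ≤ q) :
    isgn (t * (q:ℤ)) = t := isgn_pm_mul t q ht hq

lemma natAbs_mcol (t : ℤ) (ht : t = 1 ∨ t = -1) (q : ℕ) :
    (t * (q:ℤ)).natAbs = q := natAbs_pm_mul t q ht

lemma mcol_ne_zero (t : ℤ) (ht : t = 1 ∨ t = -1) (q : ℕ) (hq : 1 ≤ q) :
    t * (q:ℤ) ≠ 0 := by rcases ht with h|h <;> subst h <;> simp <;> omega

lemma mergeClass {V : Type*} (G : SimpleGraph V) (τ : V → V → ℤ) (hτ : IsSignature τ)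
    (ψ : V → ℤ) (hprop : ∀ u v, G.Adj u v → ψ u ≠ τ u v * ψ v)
    (p q : ℕ) (hq : 1 ≤ q) (c : ℤ) (hc : c = 1 ∨ c = -1)
    (huni : ∀ u v, G.Adj u v → (ψ u).natAbs = p → (ψ v).natAbs = q →
      redSign τ ψ u v = c) :
    ∃ ψ' : V → ℤ,
      (∀ u v, G.Adj u v → ψ' u ≠ τ u v * ψ' v) ∧
      (∀ v, (ψ' v).natAbs = if (ψ v).natAbs = p then q else (ψ v).natAbs) ∧
      (∀ i j s, i ≠ p → j ≠ p → HasEdgeType G τ ψ i j s → HasEdgeType G τ ψ' i j s) := by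
  classical
  have hpm : ∀ w : V, (-c) * isgn (ψ w) = 1 ∨ (-c) * isgn (ψ w) = -1 :=
    fun w => pm_mul_pm (show (-c) = 1 ∨ (-c) = -1 by omega) (isgn_cases (ψ w))
  refine ⟨fun v => if (ψ v).natAbs = p then ((-c) * isgn (ψ v)) * (q:ℤ) else ψ v, ?_, ?_, ?_⟩
  · -- properness
    intro u v huv
    beta_reduce
    by_cases hu : (ψ u).natAbs = p <;> by_cases hv : (ψ v).natAbs = p <;>
      simp only [hu, hv, if_true, if_false]
    · obtain ⟨hred, hne0⟩ := red_neg_of_proper' (hτ.2 u v) (hprop u v huv) (by omega)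
      apply proper_of_red_neg' (hτ.2 u v)
      · rw [isgn_mcol _ (hpm u) q hq, isgn_mcol _ (hpm v) q hq]
        have : -c * isgn (ψ u) * (-c * isgn (ψ v)) * τ u v
            = (c * c) * (isgn (ψ u) * isgn (ψ v) * τ u v) := by ring
        rw [this, pm_sq c hc, one_mul]
        exact hred
      · exact mcol_ne_zero _ (hpm u) q hq
    · by_cases hvq : (ψ v).natAbs = q
      · have hred : redSign τ ψ u v = c := huni u v huv hu hvq
        unfold redSign at hred
        apply proper_of_red_neg' (hτ.2 u v)
        · rw [isgn_mcol _ (hpm u) q hq]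
          have : -c * isgn (ψ u) * isgn (ψ v) * τ u v
              = (-c) * (isgn (ψ u) * isgn (ψ v) * τ u v) := by ring
          rw [this, hred]
          have : -c * c = -(c * c) := by ring
          rw [this, pm_sq c hc]
        · exact mcol_ne_zero _ (hpm u) q hq
      · apply proper_of_natAbs_ne (hτ.2 u v)
        rw [natAbs_mcol _ (hpm u) q]
        omega
    · by_cases huq : (ψ u).natAbs = q
      · have hred : redSign τ ψ v u = c := huni v u (G.adj_symm huv) hv huq
        rw [← redSign_symm τ ψ u v (hτ.1 u v)] at hred
        unfold redSign at hred
        apply proper_of_red_neg' (hτ.2 u v)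
        · rw [isgn_mcol _ (hpm v) q hq]
          have : isgn (ψ u) * (-c * isgn (ψ v)) * τ u v
              = (-c) * (isgn (ψ u) * isgn (ψ v) * τ u v) := by ring
          rw [this, hred]
          have : -c * c = -(c * c) := by ring
          rw [this, pm_sq c hc]
        · omega
      · apply proper_of_natAbs_ne (hτ.2 u v)
        rw [natAbs_mcol _ (hpm v) q]
        omega
    · exact hprop u v huv
  · -- values
    intro v
    beta_reduce
    by_cases hv : (ψ v).natAbs = p <;> simp only [hv, if_true, if_false]
    exact natAbs_mcol _ (hpm v) q
  · -- transfer
    rintro i j s hi hj ⟨u, v, e1, e2, e3, e4⟩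
    refine ⟨u, v, e1, ?_, ?_, ?_⟩ <;> beta_reduce
    · rw [if_neg (by omega)]; exact e2
    · rw [if_neg (by omega)]; exact e3
    · unfold redSign at e4 ⊢
      beta_reduce
      rw [if_neg (show ¬ (ψ u).natAbs = p by omega), if_neg (show ¬ (ψ v).natAbs = p by omega)]
      exact e4

/- ===================== swap lemma ===================== -/

lemma swapClasses {V : Type*} (G : SimpleGraph V) (τ : V → V → ℤ) (hτ : IsSignature τ)
    (ψ : V → ℤ) (hprop : ∀ u v, G.Adj u v → ψ u ≠ τ u v * ψ v)
    (p q : ℕ) (hp : 1 ≤ p) (hq : 1 ≤ q) :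
    ∃ ψ' : V → ℤ,
      (∀ u v, G.Adj u v → ψ' u ≠ τ u v * ψ' v) ∧
      (∀ v, (ψ' v).natAbs = if (ψ v).natAbs = p then q
          else if (ψ v).natAbs = q then p else (ψ v).natAbs) ∧
      (∀ i j s, HasEdgeType G τ ψ i j s → HasEdgeType G τ ψ'
        (if i = p then q else if i = q then p else i)
        (if j = p then q else if j = q then p else j) s) := by
  classical
  set f : V → ℤ := fun v => if (ψ v).natAbs = p then isgn (ψ v) * (q:ℤ)
      else if (ψ v).natAbs = q then isgn (ψ v) * (p:ℤ) else ψ v with hf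
  have hne0 : ∀ v, ψ v ≠ 0 → f v ≠ 0 := by
    intro v h0
    rw [hf]; beta_reduce
    split
    · exact mcol_ne_zero _ (isgn_cases _) q hq
    · split
      · exact mcol_ne_zero _ (isgn_cases _) p hp
      · exact h0
  have hisgn : ∀ v, ψ v ≠ 0 → isgn (f v) = isgn (ψ v) := by
    intro v h0
    rw [hf]; beta_reduce
    split
    · exact isgn_mcol _ (isgn_cases _) q hq
    · split
      · exact isgn_mcol _ (isgn_cases _) p hp
      · rfl
  have habs : ∀ v, (f v).natAbs = if (ψ v).natAbs = p then q
      else if (ψ v).natAbs = q then p else (ψ v).natAbs := by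
    intro v
    rw [hf]; beta_reduce
    split
    · rw [natAbs_mcol _ (isgn_cases _) q]
    · split
      · rw [natAbs_mcol _ (isgn_cases _) p]
      · rfl
  refine ⟨f, ?_, habs, ?_⟩
  · intro u v huv
    by_cases he : (ψ u).natAbs = (ψ v).natAbs
    · obtain ⟨hred, h0⟩ := red_neg_of_proper' (hτ.2 u v) (hprop u v huv) he
      have h0v : ψ v ≠ 0 := by omega
      apply proper_of_red_neg' (hτ.2 u v)
      · rw [hisgn u h0, hisgn v h0v]; exact hred
      · exact hne0 u h0
    · apply proper_of_natAbs_ne (hτ.2 u v)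
      rw [habs u, habs v]
      split_ifs <;> omega
  · rintro i j s ⟨u, v, e1, e2, e3, e4⟩
    refine ⟨u, v, e1, ?_, ?_, ?_⟩
    · rw [habs u, e2]
    · rw [habs v, e3]
    · unfold redSign at e4 ⊢
      by_cases h0u : ψ u = 0 <;> by_cases h0v : ψ v = 0
      · have hu' : f u = 0 := by
          rw [hf]; beta_reduce
          rw [if_neg (by omega), if_neg (by omega)]
          exact h0u
        have hv' : f v = 0 := by
          rw [hf]; beta_reduce
          rw [if_neg (by omega), if_neg (by omega)]
          exact h0v
        rw [hu', hv']
        rw [h0u, h0v] at e4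
        exact e4
      · have hu' : f u = 0 := by
          rw [hf]; beta_reduce
          rw [if_neg (by omega), if_neg (by omega)]
          exact h0u
        rw [hu', hisgn v h0v]
        rw [h0u] at e4
        exact e4
      · have hv' : f v = 0 := by
          rw [hf]; beta_reduce
          rw [if_neg (by omega), if_neg (by omega)]
          exact h0v
        rw [hv', hisgn u h0u]
        rw [h0v] at e4
        exact e4
      · rw [hisgn u h0u, hisgn v h0v]
        exact e4

/- ===================== packaging ===================== -/

lemma buildComplete {V : Type*} (G : SimpleGraph V) (τ : V → V → ℤ) (j : ℕ) (ψ : V → ℤ)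
    (hprop : ∀ u v, G.Adj u v → ψ u ≠ τ u v * ψ v)
    (hval : ∀ v, (ψ v).natAbs ≤ j / 2 ∧ (Even j → (ψ v).natAbs ≠ 0))
    (hpairs : ∀ i i' : ℕ, i ≤ j / 2 → i' ≤ j / 2 → (Even j → i ≠ 0) → (Even j → i' ≠ 0) →
      i ≠ i' → HasEdgeType G τ ψ i i' 1 ∧ HasEdgeType G τ ψ i i' (-1))
    (hdiag : ∀ i : ℕ, 1 ≤ i → i ≤ j / 2 → HasEdgeType G τ ψ i i (-1)) :
    IsCompleteColouring G τ j ψ := by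
  refine ⟨⟨fun v => ?_, hprop⟩, fun i i' hi hi' hne => ?_, fun i h1 hmem => ?_⟩
  · rw [mem_colourSet_iff]
    exact ⟨(hval v).1, fun he => by have := (hval v).2 he; omega⟩
  · rw [coe_mem_colourSet_iff] at hi hi'
    exact hpairs i i' hi.1 hi'.1 hi.2 hi'.2 hne
  · rw [coe_mem_colourSet_iff] at hmem
    exact hdiag i h1 hmem.1

/- ===================== the finishing lemma ===================== -/

lemma finishLemma {V : Type*} (G : SimpleGraph V) (τ : V → V → ℤ) (hτ : IsSignature τ)
    (k : ℕ) (hk : 3 ≤ k) (x : ℕ) (hx1 : 1 ≤ x) (hxk : x ≤ k / 2)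
    (ψ : V → ℤ)
    (hval : ∀ v, (ψ v).natAbs ≤ k / 2 ∧ (Even k → (ψ v).natAbs ≠ 0))
    (hprop : ∀ u v, G.Adj u v → ψ u ≠ τ u v * ψ v)
    (hcov : ∀ i i' : ℕ, i ≤ k / 2 → i' ≤ k / 2 → (Even k → i ≠ 0) → (Even k → i' ≠ 0) →
      i ≠ i' → i ≠ x → i' ≠ x →
      HasEdgeType G τ ψ i i' 1 ∧ HasEdgeType G τ ψ i i' (-1))
    (hdiagcov : ∀ i : ℕ, 1 ≤ i → i ≤ k / 2 → i ≠ x → HasEdgeType G τ ψ i i (-1))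
    (hdiagx : HasEdgeType G τ ψ x x (-1)) :
    ∃ j : ℕ, k ≤ j + 2 ∧ ∃ ψ', IsCompleteColouring G τ j ψ' := by
  classical
  by_cases Hnz : ∀ z, 1 ≤ z → z ≤ k / 2 → z ≠ x →
      (HasEdgeType G τ ψ x z 1 ∧ HasEdgeType G τ ψ x z (-1))
  · -- all pairs (x, nonzero) covered
    by_cases H0 : (¬ Even k) →
        (HasEdgeType G τ ψ x 0 1 ∧ HasEdgeType G τ ψ x 0 (-1))
    · -- everything covered : ψ itself is a complete k-colouring
      refine ⟨k, by omega, ψ, buildComplete G τ k ψ hprop hval ?_ ?_⟩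
      · intro i i' hi hi' hi0 hi'0 hne
        by_cases hix : i = x
        · subst hix
          by_cases hi'0' : i' = 0
          · subst hi'0'
            have hodd : ¬ Even k := fun he => (hi'0 he) rfl
            exact H0 hodd
          · exact Hnz i' (by omega) hi' (by omega)
        · by_cases hi'x : i' = x
          · subst hi'x
            by_cases hi0' : i = 0
            · subst hi0'
              have hodd : ¬ Even k := fun he => (hi0 he) rfl
              obtain ⟨w1, w2⟩ := H0 hodd
              exact ⟨hasEdgeType_symm hτ.1 w1, hasEdgeType_symm hτ.1 w2⟩
            · obtain ⟨w1, w2⟩ := Hnz i (by omega) hi (by omega)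
              exact ⟨hasEdgeType_symm hτ.1 w1, hasEdgeType_symm hτ.1 w2⟩
          · exact hcov i i' hi hi' hi0 hi'0 hne hix hi'x
      · intro i h1 hik
        by_cases hix : i = x
        · subst hix; exact hdiagx
        · exact hdiagcov i h1 hik hix
    · -- k odd, a type (x,0,s₀) missing : merge class 0 into class x, k-1 colours
      push_neg at H0
      obtain ⟨hodd, H0'⟩ := H0
      have hcases : ¬ HasEdgeType G τ ψ x 0 1 ∨ ¬ HasEdgeType G τ ψ x 0 (-1) := by
        by_cases h1 : HasEdgeType G τ ψ x 0 1
        · right; exact H0' h1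
        · left; exact h1
      obtain ⟨s₀, hs₀pm, hs₀⟩ : ∃ s₀ : ℤ, (s₀ = 1 ∨ s₀ = -1) ∧ ¬ HasEdgeType G τ ψ x 0 s₀ := by
        rcases hcases with h|h
        · exact ⟨1, Or.inl rfl, h⟩
        · exact ⟨-1, Or.inr rfl, h⟩
      have huni : ∀ u v, G.Adj u v → (ψ u).natAbs = 0 → (ψ v).natAbs = x →
          redSign τ ψ u v = -s₀ := by
        intro u v huv hu hv
        rcases redSign_pm τ ψ u v (hτ.2 u v) with h|h <;>
          rcases hs₀pm with h'|h' <;> subst h' <;> try omega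
        all_goals {
          exfalso; apply hs₀
          refine ⟨v, u, G.adj_symm huv, hv, hu, ?_⟩
          rw [← redSign_symm τ ψ u v (hτ.1 u v)]; omega }
      obtain ⟨ψ', hprop', hvals', htrans'⟩ :=
        mergeClass G τ hτ ψ hprop 0 x hx1 (-s₀) (by omega) huni
      have harith : (k - 1) / 2 = k / 2 := by
        rw [Nat.even_iff] at hodd; omega
      have heven : Even (k - 1) := by
        rw [Nat.even_iff] at hodd ⊢; omega
      refine ⟨k - 1, by omega, ψ', buildComplete G τ (k-1) ψ' hprop' ?_ ?_ ?_⟩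
      · intro v
        rw [hvals' v, harith]
        constructor
        · split <;> [exact hxk; exact (hval v).1]
        · intro _; split <;> omega
      · intro i i' hi hi' hi0 hi'0 hne
        rw [harith] at hi hi'
        have hi0' : i ≠ 0 := hi0 heven
        have hi'0' : i' ≠ 0 := hi'0 heven
        have key : ∀ s, (HasEdgeType G τ ψ i i' s) → HasEdgeType G τ ψ' i i' s :=
          fun s h => htrans' i i' s hi0' hi'0' h
        by_cases hix : i = x
        · subst hix
          obtain ⟨w1, w2⟩ := Hnz i' (by omega) hi' hne.symm
          exact ⟨key 1 w1, key (-1) w2⟩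
        · by_cases hi'x : i' = x
          · subst hi'x
            obtain ⟨w1, w2⟩ := Hnz i (by omega) hi (by omega)
            exact ⟨key 1 (hasEdgeType_symm hτ.1 w1), key (-1) (hasEdgeType_symm hτ.1 w2)⟩
          · obtain ⟨w1, w2⟩ := hcov i i' hi hi' (fun _ => hi0') (fun _ => hi'0') hne hix hi'x
            exact ⟨key 1 w1, key (-1) w2⟩
      · intro i h1 hik
        rw [harith] at hik
        by_cases hix : i = x
        · subst hix; exact htrans' _ _ _ (by omega) (by omega) hdiagx
        · exact htrans' _ _ _ (by omega) (by omega) (hdiagcov i h1 hik hix)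
  · -- a type (x, z*, s*) missing with z* nonzero : merge class x into z*, k-2 colours
    push_neg at Hnz
    obtain ⟨z, hz1, hzk, hzx, hzmiss⟩ := Hnz
    obtain ⟨s₀, hs₀pm, hs₀⟩ : ∃ s₀ : ℤ, (s₀ = 1 ∨ s₀ = -1) ∧ ¬ HasEdgeType G τ ψ x z s₀ := by
      by_cases h1 : HasEdgeType G τ ψ x z 1
      · exact ⟨-1, Or.inr rfl, hzmiss h1⟩
      · exact ⟨1, Or.inl rfl, h1⟩
    have huni : ∀ u v, G.Adj u v → (ψ u).natAbs = x → (ψ v).natAbs = z →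
        redSign τ ψ u v = -s₀ := by
      intro u v huv hu hv
      rcases redSign_pm τ ψ u v (hτ.2 u v) with h|h <;>
        rcases hs₀pm with h'|h' <;> subst h' <;> try omega
      all_goals {
        exfalso; apply hs₀
        exact ⟨u, v, huv, hu, hv, by omega⟩ }
    obtain ⟨ψ', hprop', hvals', htrans'⟩ :=
      mergeClass G τ hτ ψ hprop x z hz1 (-s₀) (by omega) huni
    have hK1 : 1 ≤ k / 2 := by omega
    obtain ⟨ψ'', hprop'', hvals'', htrans''⟩ :=
      swapClasses G τ hτ ψ' hprop' x (k / 2) hx1 hK1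
    have harith : (k - 2) / 2 = k / 2 - 1 := by omega
    have heven : Even (k - 2) ↔ Even k := by
      rw [Nat.even_iff, Nat.even_iff]; omega
    -- σw i = preimage of i under the swap
    have hback : ∀ i : ℕ, i ≤ k / 2 - 1 →
        ((if (if i = x then k / 2 else i) = x then k / 2
          else if (if i = x then k / 2 else i) = k / 2 then x
          else (if i = x then k / 2 else i)) = i) := by
      intro i hi
      by_cases hix : i = x
      · subst hix
        rw [if_pos rfl, if_neg (by omega), if_pos rfl]
      · rw [if_neg hix, if_neg hix, if_neg (by omega)]
    refine ⟨k - 2, by omega, ψ'', buildComplete G τ (k-2) ψ'' hprop'' ?_ ?_ ?_⟩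
    · intro v
      rw [hvals'' v, hvals' v, harith]
      constructor
      · have h1 := (hval v).1
        split_ifs <;> omega
      · intro he
        have he' : Even k := heven.mp he
        have h2 := (hval v).2 he'
        split_ifs <;> omega
    · intro i i' hi hi' hi0 hi'0 hne
      rw [harith] at hi hi'
      have hpix : (if i = x then k / 2 else i) ≠ x := by split <;> omega
      have hpi'x : (if i' = x then k / 2 else i') ≠ x := by split <;> omega
      have hpik : (if i = x then k / 2 else i) ≤ k / 2 := by split <;> omega
      have hpi'k : (if i' = x then k / 2 else i') ≤ k / 2 := by split <;> omega
      have hpine : (if i = x then k / 2 else i) ≠ (if i' = x then k / 2 else i') := by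
        split_ifs <;> omega
      have hpi0 : Even k → (if i = x then k / 2 else i) ≠ 0 := by
        intro he; have := hi0 (heven.mpr he); split <;> omega
      have hpi'0 : Even k → (if i' = x then k / 2 else i') ≠ 0 := by
        intro he; have := hi'0 (heven.mpr he); split <;> omega
      obtain ⟨w1, w2⟩ := hcov _ _ hpik hpi'k hpi0 hpi'0 hpine hpix hpi'x
      have key : ∀ s, HasEdgeType G τ ψ (if i = x then k / 2 else i)
          (if i' = x then k / 2 else i') s → HasEdgeType G τ ψ'' i i' s := by
        intro s h
        have h2 := htrans' _ _ s hpix hpi'x h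
        have h3 := htrans'' _ _ s h2
        rw [hback i hi, hback i' hi'] at h3
        exact h3
      exact ⟨key 1 w1, key (-1) w2⟩
    · intro i h1 hik
      rw [harith] at hik
      have hpix : (if i = x then k / 2 else i) ≠ x := by split <;> omega
      have hpik : (if i = x then k / 2 else i) ≤ k / 2 := by split <;> omega
      have hpi1 : 1 ≤ (if i = x then k / 2 else i) := by split <;> omega
      have w := hdiagcov _ hpi1 hpik hpix
      have h2 := htrans' _ _ (-1) hpix hpix w
      have h3 := htrans'' _ _ (-1) h2
      rw [hback i hik] at h3
      exact h3

/- ===================== reachability helpers ===================== -/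

lemma rtg_symm {α : Type*} {r : α → α → Prop} (hr : ∀ u v, r u v → r v u) {x y : α}
    (h : Relation.ReflTransGen r x y) : Relation.ReflTransGen r y x := by
  induction h with
  | refl => exact .refl
  | tail _ h2 ih => exact Relation.ReflTransGen.trans (.single (hr _ _ h2)) ih

/- ===================== case D1 : flip the internal component of b ===================== -/

lemma caseD1 {V : Type*} (G : SimpleGraph V) (τ' : V → V → ℤ) (hτ' : IsSignature τ')
    (k x : ℕ) (hk : 3 ≤ k) (hx1 : 1 ≤ x) (hxk : x ≤ k / 2)
    (φ : V → ℤ) (hφ0 : ∀ v, 0 ≤ φ v)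
    (hvalφ : ∀ v, (φ v).natAbs ≤ k / 2 ∧ (Even k → (φ v).natAbs ≠ 0))
    (a b : V) (hab : G.Adj a b)
    (hxa : (φ a).natAbs = x) (hxb : (φ b).natAbs = x) (hτ'ab : τ' a b = 1)
    (hproff : ∀ u v, G.Adj u v → ¬((u = a ∧ v = b) ∨ (u = b ∧ v = a)) →
      φ u ≠ τ' u v * φ v)
    (hpairs' : ∀ i i' : ℕ, i ≤ k / 2 → i' ≤ k / 2 → (Even k → i ≠ 0) → (Even k → i' ≠ 0) →
      i ≠ i' → HasEdgeType G τ' φ i i' 1 ∧ HasEdgeType G τ' φ i i' (-1))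
    (hdiag' : ∀ i : ℕ, 1 ≤ i → i ≤ k / 2 → i ≠ x → HasEdgeType G τ' φ i i (-1))
    (hnreach : ¬ Relation.ReflTransGen
      (fun u v => G.Adj u v ∧ (φ u).natAbs = x ∧ (φ v).natAbs = x ∧
        ¬((u = a ∧ v = b) ∨ (u = b ∧ v = a))) b a) :
    ∃ j : ℕ, k ≤ j + 2 ∧ ∃ ψ', IsCompleteColouring G τ' j ψ' := by
  classical
  set R : V → V → Prop := fun u v => G.Adj u v ∧ (φ u).natAbs = x ∧ (φ v).natAbs = x ∧
        ¬((u = a ∧ v = b) ∨ (u = b ∧ v = a)) with hR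
  set C : V → Prop := fun v => Relation.ReflTransGen R b v with hC
  have hCb : C b := Relation.ReflTransGen.refl
  have hCa : ¬ C a := hnreach
  have hCval : ∀ v, C v → (φ v).natAbs = x := by
    intro v hv
    rw [hC] at hv
    induction hv with
    | refl => exact hxb
    | tail _ h2 _ => exact h2.2.2.1
  have hCtail : ∀ u v, C u → R u v → C v := by
    intro u v hu huv
    exact Relation.ReflTransGen.tail hu huv
  set ψ : V → ℤ := fun v => if C v then -φ v else φ v with hψ
  have hψval : ∀ v, (ψ v).natAbs = (φ v).natAbs := by
    intro v; rw [hψ]; beta_reduce; split <;> simp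
  have hψeqnotC : ∀ v, ¬ C v → ψ v = φ v := by
    intro v hv; rw [hψ]; beta_reduce; rw [if_neg hv]
  -- properness
  have hψprop : ∀ u v, G.Adj u v → ψ u ≠ τ' u v * ψ v := by
    intro u v huv
    have hψu : ψ u = if C u then -φ u else φ u := rfl
    have hψv : ψ v = if C v then -φ v else φ v := rfl
    by_cases hcu : C u <;> by_cases hcv : C v <;>
      rw [hψu, hψv] <;> simp only [hcu, hcv, if_true, if_false]
    · -- both flipped
      have hnp : ¬((u = a ∧ v = b) ∨ (u = b ∧ v = a)) := by
        rintro (⟨h1, _⟩ | ⟨_, h2⟩)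
        · exact hCa (h1 ▸ hcu)
        · exact hCa (h2 ▸ hcv)
      intro h
      exact hproff u v huv hnp (by linear_combination -h)
    · -- u flipped, v not
      by_cases hvx : (φ v).natAbs = x
      · -- must be the pair (b, a)
        have hpair : (u = a ∧ v = b) ∨ (u = b ∧ v = a) := by
          by_contra hnp
          exact hcv (hCtail u v hcu ⟨huv, hCval u hcu, hvx, hnp⟩)
        obtain ⟨h1, _⟩ | ⟨h1, h2⟩ := hpair
        · exact absurd (h1 ▸ hcu) hCa
        · rw [h1, h2]
          have hb0 : 0 ≤ φ b := hφ0 b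
          have ha0 : 0 ≤ φ a := hφ0 a
          apply proper_of_red_neg' (hτ'.2 b a)
          · have h3 : isgn (-φ b) = -1 := by unfold isgn; split <;> omega
            rw [h3, isgn_nonneg _ ha0]
            have h4 : τ' b a = 1 := by rw [hτ'.1 b a]; exact hτ'ab
            rw [h4]; ring
          · omega
      · apply proper_of_natAbs_ne (hτ'.2 u v)
        have h1 : (-φ u).natAbs = x := by
          have := hCval u hcu; omega
        omega
    · -- v flipped, u not
      by_cases hux : (φ u).natAbs = x
      · have hpair : (u = a ∧ v = b) ∨ (u = b ∧ v = a) := by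
          by_contra hnp
          have hnp' : ¬((v = a ∧ u = b) ∨ (v = b ∧ u = a)) := by tauto
          exact hcu (hCtail v u hcv ⟨G.adj_symm huv, hCval v hcv, hux, hnp'⟩)
        obtain ⟨h1, h2⟩ | ⟨_, h2⟩ := hpair
        · rw [h1, h2]
          have hb0 : 0 ≤ φ b := hφ0 b
          have ha0 : 0 ≤ φ a := hφ0 a
          apply proper_of_red_neg' (hτ'.2 a b)
          · have h3 : isgn (-φ b) = -1 := by unfold isgn; split <;> omega
            rw [h3, isgn_nonneg _ ha0, hτ'ab]; ring
          · omega
        · exact absurd (h2 ▸ hcv) hCa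
      · apply proper_of_natAbs_ne (hτ'.2 u v)
        have h1 : (-φ v).natAbs = x := by
          have := hCval v hcv; omega
        omega
    · -- neither flipped
      have hnp : ¬((u = a ∧ v = b) ∨ (u = b ∧ v = a)) := by
        rintro (⟨_, h2⟩ | ⟨h1, _⟩)
        · exact hcv (h2 ▸ hCb)
        · exact hcu (h1 ▸ hCb)
      exact hproff u v huv hnp
  -- the untouched-transfer
  have htrans : ∀ i i' s, i ≠ x → i' ≠ x →
      HasEdgeType G τ' φ i i' s → HasEdgeType G τ' ψ i i' s := by
    intro i i' s hix hi'x h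
    apply hasEdgeType_transfer h
    intro u v _ hu hv
    refine ⟨hψeqnotC u (fun hc => hix ((hCval u hc) ▸ hu ▸ rfl)), 
            hψeqnotC v (fun hc => hi'x ((hCval v hc) ▸ hv ▸ rfl)), rfl⟩
  apply finishLemma G τ' hτ' k hk x hx1 hxk ψ
  · intro v; rw [hψval v]; exact hvalφ v
  · exact hψprop
  · intro i i' hi hi' hi0 hi'0 hne hix hi'x
    obtain ⟨w1, w2⟩ := hpairs' i i' hi hi' hi0 hi'0 hne
    exact ⟨htrans i i' 1 hix hi'x w1, htrans i i' (-1) hix hi'x w2⟩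
  · intro i h1 hik hix
    exact htrans i i (-1) hix hix (hdiag' i h1 hik hix)
  · -- diagonal at x : the edge ab, now with red sign -1
    refine ⟨a, b, hab, ?_, ?_, ?_⟩
    · rw [hψeqnotC a hCa]; exact hxa
    · rw [hψval b]; exact hxb
    · unfold redSign
      rw [hψeqnotC a hCa]
      have hb : ψ b = -φ b := by
        have : ψ b = if C b then -φ b else φ b := rfl
        rw [this, if_pos hCb]
      rw [hb]
      have hbnn : 0 ≤ φ b := hφ0 b
      have hb0 : 0 < φ b := by omega
      have h1 : isgn (-φ b) = -1 := by unfold isgn; split <;> omega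
      rw [h1, isgn_nonneg _ (hφ0 a), hτ'ab]
      ring

/- ===================== case D2 : b has a uniform target class ===================== -/

/-- shared core: a recolouring that only changes `b`, properly, to a value `m ≠ x`,
finishes the job (given the path fact giving an internal edge at `a` avoiding `b`). -/
lemma caseD2core {V : Type*} (G : SimpleGraph V) (τ' : V → V → ℤ) (hτ' : IsSignature τ')
    (k x : ℕ) (hk : 3 ≤ k) (hx1 : 1 ≤ x) (hxk : x ≤ k / 2)
    (φ : V → ℤ)
    (hvalφ : ∀ v, (φ v).natAbs ≤ k / 2 ∧ (Even k → (φ v).natAbs ≠ 0))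
    (a b : V)
    (hxb : (φ b).natAbs = x)
    (hproff : ∀ u v, G.Adj u v → ¬((u = a ∧ v = b) ∨ (u = b ∧ v = a)) →
      φ u ≠ τ' u v * φ v)
    (hpairs' : ∀ i i' : ℕ, i ≤ k / 2 → i' ≤ k / 2 → (Even k → i ≠ 0) → (Even k → i' ≠ 0) →
      i ≠ i' → HasEdgeType G τ' φ i i' 1 ∧ HasEdgeType G τ' φ i i' (-1))
    (hdiag' : ∀ i : ℕ, 1 ≤ i → i ≤ k / 2 → i ≠ x → HasEdgeType G τ' φ i i (-1))
    (a1 : V) (ha1a : G.Adj a1 a) (hha1 : (φ a1).natAbs = x) (hxa : (φ a).natAbs = x)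
    (ha1b : a1 ≠ b) (hanb : a ≠ b)
    (m : ℕ) (hmk : m ≤ k / 2) (hmx : m ≠ x) (hm0 : Even k → m ≠ 0)
    (ψ : V → ℤ)
    (hψb : (ψ b).natAbs = m) (hψeq : ∀ v, v ≠ b → ψ v = φ v)
    (hψprop : ∀ u v, G.Adj u v → ψ u ≠ τ' u v * ψ v) :
    ∃ j : ℕ, k ≤ j + 2 ∧ ∃ ψ', IsCompleteColouring G τ' j ψ' := by
  classical
  have htrans : ∀ i i' s, i ≠ x → i' ≠ x →
      HasEdgeType G τ' φ i i' s → HasEdgeType G τ' ψ i i' s := by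
    intro i i' s hix hi'x h
    apply hasEdgeType_transfer h
    intro u v _ hu hv
    refine ⟨hψeq u ?_, hψeq v ?_, rfl⟩
    · intro he; rw [he, hxb] at hu; exact hix hu.symm
    · intro he; rw [he, hxb] at hv; exact hi'x hv.symm
  apply finishLemma G τ' hτ' k hk x hx1 hxk ψ
  · intro v
    by_cases hvb : v = b
    · subst hvb; rw [hψb]; exact ⟨hmk, hm0⟩
    · rw [hψeq v hvb]; exact hvalφ v
  · exact hψprop
  · intro i i' hi hi' hi0 hi'0 hne hix hi'x
    obtain ⟨w1, w2⟩ := hpairs' i i' hi hi' hi0 hi'0 hne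
    exact ⟨htrans i i' 1 hix hi'x w1, htrans i i' (-1) hix hi'x w2⟩
  · intro i h1 hik hix
    exact htrans i i (-1) hix hix (hdiag' i h1 hik hix)
  · -- diagonal at x : the internal edge a1–a (not involving b)
    refine ⟨a1, a, ha1a, ?_, ?_, ?_⟩
    · rw [hψeq a1 ha1b]; exact hha1
    · rw [hψeq a hanb]; exact hxa
    · have hnp : ¬((a1 = a ∧ a = b) ∨ (a1 = b ∧ a = a)) := by
        rintro (⟨h1, _⟩ | ⟨h1, _⟩)
        · exact (G.ne_of_adj ha1a) h1
        · exact ha1b h1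
      have := red_neg_of_proper' (hτ'.2 a1 a) (hproff a1 a ha1a hnp) (by omega)
      unfold redSign
      rw [hψeq a1 ha1b, hψeq a hanb]
      exact this.1

lemma caseD2 {V : Type*} (G : SimpleGraph V) (τ' : V → V → ℤ) (hτ' : IsSignature τ')
    (k x : ℕ) (hk : 3 ≤ k) (hx1 : 1 ≤ x) (hxk : x ≤ k / 2)
    (φ : V → ℤ) (hφ0 : ∀ v, 0 ≤ φ v)
    (hvalφ : ∀ v, (φ v).natAbs ≤ k / 2 ∧ (Even k → (φ v).natAbs ≠ 0))
    (a b : V) (hab : G.Adj a b)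
    (hxa : (φ a).natAbs = x) (hxb : (φ b).natAbs = x)
    (hproff : ∀ u v, G.Adj u v → ¬((u = a ∧ v = b) ∨ (u = b ∧ v = a)) →
      φ u ≠ τ' u v * φ v)
    (hpairs' : ∀ i i' : ℕ, i ≤ k / 2 → i' ≤ k / 2 → (Even k → i ≠ 0) → (Even k → i' ≠ 0) →
      i ≠ i' → HasEdgeType G τ' φ i i' 1 ∧ HasEdgeType G τ' φ i i' (-1))
    (hdiag' : ∀ i : ℕ, 1 ≤ i → i ≤ k / 2 → i ≠ x → HasEdgeType G τ' φ i i (-1))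
    (hreach : Relation.ReflTransGen
      (fun u v => G.Adj u v ∧ (φ u).natAbs = x ∧ (φ v).natAbs = x ∧
        ¬((u = a ∧ v = b) ∨ (u = b ∧ v = a))) b a)
    (m : ℕ) (hmk : m ≤ k / 2) (hmx : m ≠ x)
    (hT : (1 ≤ m ∧ ∃ c : ℤ, (c = 1 ∨ c = -1) ∧
            ∀ w, G.Adj b w → (φ w).natAbs = m → τ' b w = c) ∨
          (m = 0 ∧ ¬ Even k ∧ ∀ w, G.Adj b w → (φ w).natAbs ≠ 0)) :
    ∃ j : ℕ, k ≤ j + 2 ∧ ∃ ψ', IsCompleteColouring G τ' j ψ' := by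
  classical
  obtain ⟨a1, ha1R⟩ : ∃ a1, (G.Adj a1 a ∧ (φ a1).natAbs = x ∧ (φ a).natAbs = x ∧
      ¬((a1 = a ∧ a = b) ∨ (a1 = b ∧ a = a))) := by
    rcases (Relation.ReflTransGen.cases_tail hreach) with h | ⟨c', _, hR⟩
    · exact absurd h (G.ne_of_adj hab)
    · exact ⟨c', hR⟩
  have ha1b : a1 ≠ b := fun h => ha1R.2.2.2 (Or.inr ⟨h, rfl⟩)
  have hanb : a ≠ b := G.ne_of_adj hab
  -- facts about edges not involving b at all
  rcases hT with ⟨hm1, c, hcpm, hcuni⟩ | ⟨hm0, hodd, hno0⟩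
  · -- target class m ≥ 1, with uniform sign c on edges from b
    set ψ : V → ℤ := fun v => if v = b then (-c) * (m:ℤ) else φ v with hψ
    have hψb : ψ b = (-c) * (m:ℤ) := by simp [hψ]
    have hψeq : ∀ v, v ≠ b → ψ v = φ v := by
      intro v hv; rw [hψ]; beta_reduce; rw [if_neg hv]
    have hcpm' : (-c) = 1 ∨ (-c) = -1 := by omega
    have hψprop : ∀ u v, G.Adj u v → ψ u ≠ τ' u v * ψ v := by
      intro u v huv
      by_cases hub : u = b <;> by_cases hvb : v = b
      · exact absurd (hub ▸ hvb ▸ huv) (G.irrefl)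
      · -- u = b
        rw [hub, hψb, hψeq v hvb]
        have huv' : G.Adj b v := hub ▸ huv
        by_cases hvm : (φ v).natAbs = m
        · apply proper_of_red_neg' (hτ'.2 b v)
          · rw [isgn_mcol _ hcpm' m hm1, isgn_nonneg _ (hφ0 v), hcuni v huv' hvm]
            have : -c * 1 * c = -(c * c) := by ring
            rw [this, pm_sq c hcpm]
          · exact mcol_ne_zero _ hcpm' m hm1
        · apply proper_of_natAbs_ne (hτ'.2 b v)
          rw [natAbs_mcol _ hcpm' m]
          omega
      · -- v = b
        rw [hvb, hψb, hψeq u hub]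
        have huv' : G.Adj u b := hvb ▸ huv
        by_cases hum : (φ u).natAbs = m
        · have hred : τ' b u = c := hcuni u (G.adj_symm huv') hum
          apply proper_of_red_neg' (hτ'.2 u b)
          · rw [isgn_mcol _ hcpm' m hm1, isgn_nonneg _ (hφ0 u)]
            rw [hτ'.1 u b, hred]
            have : 1 * -c * c = -(c * c) := by ring
            rw [this, pm_sq c hcpm]
          · intro h0; rw [h0] at hum; rw [show ((0:ℤ)).natAbs = 0 from rfl] at hum; omega
        · apply proper_of_natAbs_ne (hτ'.2 u b)
          rw [natAbs_mcol _ hcpm' m]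
          omega
      · -- neither is b
        rw [hψeq u hub, hψeq v hvb]
        have hnp : ¬((u = a ∧ v = b) ∨ (u = b ∧ v = a)) := by
          rintro (⟨_, h2⟩ | ⟨h1, _⟩)
          · exact hvb h2
          · exact hub h1
        exact hproff u v huv hnp
    exact caseD2core G τ' hτ' k x hk hx1 hxk φ hvalφ a b hxb hproff hpairs' hdiag'
      a1 ha1R.1 ha1R.2.1 hxa ha1b hanb m hmk hmx (fun _ => by omega) ψ
      (by rw [hψb]; exact natAbs_mcol _ hcpm' m) hψeq hψprop
  · -- target colour 0 (k odd), b has no neighbours coloured 0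
    set ψ : V → ℤ := fun v => if v = b then 0 else φ v with hψ
    have hψb : ψ b = 0 := by simp [hψ]
    have hψeq : ∀ v, v ≠ b → ψ v = φ v := by
      intro v hv; rw [hψ]; beta_reduce; rw [if_neg hv]
    have hψprop : ∀ u v, G.Adj u v → ψ u ≠ τ' u v * ψ v := by
      intro u v huv
      by_cases hub : u = b <;> by_cases hvb : v = b
      · exact absurd (hub ▸ hvb ▸ huv) (G.irrefl)
      · rw [hub, hψb, hψeq v hvb]
        have huv' : G.Adj b v := hub ▸ huv
        have h0 := hno0 v huv'
        apply proper_of_natAbs_ne (hτ'.2 b v)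
        omega
      · rw [hvb, hψb, hψeq u hub, mul_zero]
        have huv' : G.Adj u b := hvb ▸ huv
        have h0 := hno0 u (G.adj_symm huv')
        omega
      · rw [hψeq u hub, hψeq v hvb]
        have hnp : ¬((u = a ∧ v = b) ∨ (u = b ∧ v = a)) := by
          rintro (⟨_, h2⟩ | ⟨h1, _⟩)
          · exact hvb h2
          · exact hub h1
        exact hproff u v huv hnp
    exact caseD2core G τ' hτ' k x hk hx1 hxk φ hvalφ a b hxb hproff hpairs' hdiag'
      a1 ha1R.1 ha1R.2.1 hxa ha1b hanb m hmk hmx (fun he => absurd he hodd) ψ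
      (by rw [hψb, hm0]; rfl) hψeq hψprop

/- ===================== case D3 ===================== -/

lemma red_of_nonneg {V : Type*} (τ : V → V → ℤ) (φ : V → ℤ) (u v : V)
    (hu : 0 ≤ φ u) (hv : 0 ≤ φ v) : redSign τ φ u v = τ u v := by
  unfold redSign
  rw [isgn_nonneg _ hu, isgn_nonneg _ hv]; ring

lemma caseD3even {V : Type*} (G : SimpleGraph V) (τ' : V → V → ℤ) (hτ' : IsSignature τ')
    (k x : ℕ) (hk : 3 ≤ k) (hx1 : 1 ≤ x) (hxk : x ≤ k / 2)
    (φ : V → ℤ) (hφ0 : ∀ v, 0 ≤ φ v)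
    (hvalφ : ∀ v, (φ v).natAbs ≤ k / 2 ∧ (Even k → (φ v).natAbs ≠ 0))
    (a b : V) (hab : G.Adj a b)
    (hxa : (φ a).natAbs = x) (hxb : (φ b).natAbs = x) (hτ'ab : τ' a b = 1)
    (hproff : ∀ u v, G.Adj u v → ¬((u = a ∧ v = b) ∨ (u = b ∧ v = a)) →
      φ u ≠ τ' u v * φ v)
    (hpairs' : ∀ i i' : ℕ, i ≤ k / 2 → i' ≤ k / 2 → (Even k → i ≠ 0) → (Even k → i' ≠ 0) →
      i ≠ i' → HasEdgeType G τ' φ i i' 1 ∧ HasEdgeType G τ' φ i i' (-1))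
    (hdiag' : ∀ i : ℕ, 1 ≤ i → i ≤ k / 2 → i ≠ x → HasEdgeType G τ' φ i i (-1))
    (a1 : V) (ha1a : G.Adj a1 a) (hva1 : (φ a1).natAbs = x) (ha1b : a1 ≠ b)
    (p : V) (hbp : G.Adj b p) (hvp : (φ p).natAbs = x) (hpa : p ≠ a)
    (hrich_a : ∀ m : ℕ, 1 ≤ m → m ≤ k / 2 → m ≠ x →
      (∃ w, G.Adj a w ∧ (φ w).natAbs = m ∧ τ' a w = 1) ∧
      (∃ w, G.Adj a w ∧ (φ w).natAbs = m ∧ τ' a w = -1))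
    (hrich_b : ∀ m : ℕ, 1 ≤ m → m ≤ k / 2 → m ≠ x →
      (∃ w, G.Adj b w ∧ (φ w).natAbs = m ∧ τ' b w = 1) ∧
      (∃ w, G.Adj b w ∧ (φ w).natAbs = m ∧ τ' b w = -1))
    (heven : Even k) :
    ∃ j : ℕ, k ≤ j + 2 ∧ ∃ ψ', IsCompleteColouring G τ' j ψ' := by
  classical
  have hanb : a ≠ b := G.ne_of_adj hab
  have hpb : p ≠ b := fun h => G.irrefl (h ▸ hbp)
  set ψ : V → ℤ := fun v => if v = b then 0 else φ v with hψ
  have hψb : ψ b = 0 := by simp [hψ]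
  have hψeq : ∀ v, v ≠ b → ψ v = φ v := by
    intro v hv; rw [hψ]; beta_reduce; rw [if_neg hv]
  have hne0 : ∀ v, v ≠ b → (φ v).natAbs ≠ 0 := fun v _ => (hvalφ v).2 heven
  -- internal edges have τ' = -1
  have hint : ∀ u v, G.Adj u v → ¬((u = a ∧ v = b) ∨ (u = b ∧ v = a)) →
      (φ u).natAbs = x → (φ v).natAbs = x → τ' u v = -1 := by
    intro u v huv hnp hu hv
    have := red_neg_of_proper' (hτ'.2 u v) (hproff u v huv hnp) (by omega)
    rw [← red_of_nonneg τ' φ u v (hφ0 u) (hφ0 v)]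
    exact this.1
  have hτ'bp : τ' b p = -1 := by
    apply hint b p hbp _ hxb hvp
    rintro (⟨h1, _⟩ | ⟨_, h2⟩)
    · exact hanb h1.symm
    · exact hpa h2
  have hτ'a1a : τ' a1 a = -1 := by
    apply hint a1 a ha1a _ hva1 hxa
    rintro (⟨h1, _⟩ | ⟨h1, _⟩)
    · exact (G.ne_of_adj ha1a) h1
    · exact ha1b h1
  have hψprop : ∀ u v, G.Adj u v → ψ u ≠ τ' u v * ψ v := by
    intro u v huv
    by_cases hub : u = b <;> by_cases hvb : v = b
    · exact absurd (hub ▸ hvb ▸ huv) (G.irrefl)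
    · rw [hub, hψb, hψeq v hvb]
      apply proper_of_natAbs_ne (hτ'.2 b v)
      have := hne0 v hvb
      omega
    · rw [hvb, hψb, hψeq u hub, mul_zero]
      have := hne0 u hub
      omega
    · rw [hψeq u hub, hψeq v hvb]
      refine hproff u v huv ?_
      rintro (⟨_, h2⟩ | ⟨h1, _⟩)
      · exact hvb h2
      · exact hub h1
  -- red signs of edges at b in the new colouring
  have hredb : ∀ w, w ≠ b → redSign τ' ψ b w = τ' b w := by
    intro w hw
    unfold redSign
    rw [hψb, hψeq w hw, isgn_zero, isgn_nonneg _ (hφ0 w)]; ring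
  have hredbw : ∀ w, w ≠ b → redSign τ' ψ w b = τ' w b := by
    intro w hw
    unfold redSign
    rw [hψb, hψeq w hw, isgn_zero, isgn_nonneg _ (hφ0 w)]; ring
  have hredother : ∀ u w, u ≠ b → w ≠ b → redSign τ' ψ u w = τ' u w := by
    intro u w hu hw
    unfold redSign
    rw [hψeq u hu, hψeq w hw, isgn_nonneg _ (hφ0 u), isgn_nonneg _ (hφ0 w)]; ring
  have htrans : ∀ i i' s, i ≠ x → i' ≠ x →
      HasEdgeType G τ' φ i i' s → HasEdgeType G τ' ψ i i' s := by
    intro i i' s hix hi'x h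
    apply hasEdgeType_transfer h
    intro u v _ hu hv
    refine ⟨hψeq u ?_, hψeq v ?_, rfl⟩
    · intro he; rw [he, hxb] at hu; exact hix hu.symm
    · intro he; rw [he, hxb] at hv; exact hi'x hv.symm
  have harith : (k + 1) / 2 = k / 2 := by
    rw [Nat.even_iff] at heven; omega
  have hodd1 : ¬ Even (k + 1) := by
    rw [Nat.even_iff] at heven ⊢; omega
  -- pair witnesses
  have W_x0 : HasEdgeType G τ' ψ x 0 1 ∧ HasEdgeType G τ' ψ x 0 (-1) := by
    constructor
    · refine ⟨a, b, hab, ?_, ?_, ?_⟩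
      · rw [hψeq a hanb]; exact hxa
      · rw [hψb]; rfl
      · rw [hredbw a hanb]; exact hτ'ab
    · refine ⟨p, b, G.adj_symm hbp, ?_, ?_, ?_⟩
      · rw [hψeq p hpb]; exact hvp
      · rw [hψb]; rfl
      · rw [hredbw p hpb, hτ'.1 p b]; exact hτ'bp
  have W_xz : ∀ z, 1 ≤ z → z ≤ k / 2 → z ≠ x →
      HasEdgeType G τ' ψ x z 1 ∧ HasEdgeType G τ' ψ x z (-1) := by
    intro z h1 h2 h3
    obtain ⟨⟨w1, hw1a, hw1v, hw1s⟩, ⟨w2, hw2a, hw2v, hw2s⟩⟩ := hrich_a z h1 h2 h3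
    have hw1b : w1 ≠ b := fun h => h3 (by rw [h, hxb] at hw1v; omega)
    have hw2b : w2 ≠ b := fun h => h3 (by rw [h, hxb] at hw2v; omega)
    constructor
    · refine ⟨a, w1, hw1a, ?_, ?_, ?_⟩
      · rw [hψeq a hanb]; exact hxa
      · rw [hψeq w1 hw1b]; exact hw1v
      · rw [hredother a w1 hanb hw1b]; exact hw1s
    · refine ⟨a, w2, hw2a, ?_, ?_, ?_⟩
      · rw [hψeq a hanb]; exact hxa
      · rw [hψeq w2 hw2b]; exact hw2v
      · rw [hredother a w2 hanb hw2b]; exact hw2s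
  have W_0z : ∀ z, 1 ≤ z → z ≤ k / 2 → z ≠ x →
      HasEdgeType G τ' ψ 0 z 1 ∧ HasEdgeType G τ' ψ 0 z (-1) := by
    intro z h1 h2 h3
    obtain ⟨⟨w1, hw1a, hw1v, hw1s⟩, ⟨w2, hw2a, hw2v, hw2s⟩⟩ := hrich_b z h1 h2 h3
    have hw1b : w1 ≠ b := fun h => G.irrefl (h ▸ hw1a)
    have hw2b : w2 ≠ b := fun h => G.irrefl (h ▸ hw2a)
    constructor
    · refine ⟨b, w1, hw1a, ?_, ?_, ?_⟩
      · rw [hψb]; rfl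
      · rw [hψeq w1 hw1b]; exact hw1v
      · rw [hredb w1 hw1b]; exact hw1s
    · refine ⟨b, w2, hw2a, ?_, ?_, ?_⟩
      · rw [hψb]; rfl
      · rw [hψeq w2 hw2b]; exact hw2v
      · rw [hredb w2 hw2b]; exact hw2s
  refine ⟨k + 1, by omega, ψ, buildComplete G τ' (k+1) ψ hψprop ?_ ?_ ?_⟩
  · intro v
    rw [harith]
    constructor
    · by_cases hvb : v = b
      · rw [hvb, hψb]; simp
      · rw [hψeq v hvb]; exact (hvalφ v).1
    · intro he; exact absurd he hodd1
  · intro i i' hi hi' _ _ hne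
    rw [harith] at hi hi'
    by_cases hix : i = x
    · subst hix
      by_cases hi'0 : i' = 0
      · subst hi'0; exact W_x0
      · exact W_xz i' (by omega) hi' (by omega)
    · by_cases hi'x : i' = x
      · subst hi'x
        by_cases hi0 : i = 0
        · subst hi0
          exact ⟨hasEdgeType_symm hτ'.1 W_x0.1, hasEdgeType_symm hτ'.1 W_x0.2⟩
        · obtain ⟨w1, w2⟩ := W_xz i (by omega) hi (by omega)
          exact ⟨hasEdgeType_symm hτ'.1 w1, hasEdgeType_symm hτ'.1 w2⟩
      · by_cases hi0 : i = 0
        · subst hi0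
          exact W_0z i' (by omega) hi' hi'x
        · by_cases hi'0 : i' = 0
          · subst hi'0
            obtain ⟨w1, w2⟩ := W_0z i (by omega) hi hix
            exact ⟨hasEdgeType_symm hτ'.1 w1, hasEdgeType_symm hτ'.1 w2⟩
          · obtain ⟨w1, w2⟩ := hpairs' i i' hi hi' (fun _ => hi0) (fun _ => hi'0) hne
            exact ⟨htrans i i' 1 hix hi'x w1, htrans i i' (-1) hix hi'x w2⟩
  · intro i h1 hik
    rw [harith] at hik
    by_cases hix : i = x
    · subst hix
      refine ⟨a1, a, ha1a, ?_, ?_, ?_⟩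
      · rw [hψeq a1 ha1b]; exact hva1
      · rw [hψeq a hanb]; exact hxa
      · rw [hredother a1 a ha1b hanb]; exact hτ'a1a
    · exact htrans i i (-1) hix hix (hdiag' i h1 hik hix)

lemma caseD3odd {V : Type*} (G : SimpleGraph V) (τ' : V → V → ℤ) (hτ' : IsSignature τ')
    (k x : ℕ) (hk : 3 ≤ k) (hx1 : 1 ≤ x) (hxk : x ≤ k / 2)
    (φ : V → ℤ) (hφ0 : ∀ v, 0 ≤ φ v)
    (hvalφ : ∀ v, (φ v).natAbs ≤ k / 2 ∧ (Even k → (φ v).natAbs ≠ 0))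
    (a b : V) (hab : G.Adj a b)
    (hxa : (φ a).natAbs = x) (hxb : (φ b).natAbs = x) (hτ'ab : τ' a b = 1)
    (hproff : ∀ u v, G.Adj u v → ¬((u = a ∧ v = b) ∨ (u = b ∧ v = a)) →
      φ u ≠ τ' u v * φ v)
    (hpairs' : ∀ i i' : ℕ, i ≤ k / 2 → i' ≤ k / 2 → (Even k → i ≠ 0) → (Even k → i' ≠ 0) →
      i ≠ i' → HasEdgeType G τ' φ i i' 1 ∧ HasEdgeType G τ' φ i i' (-1))
    (hdiag' : ∀ i : ℕ, 1 ≤ i → i ≤ k / 2 → i ≠ x → HasEdgeType G τ' φ i i (-1))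
    (a1 : V) (ha1a : G.Adj a1 a) (hva1 : (φ a1).natAbs = x) (ha1b : a1 ≠ b)
    (p : V) (hbp : G.Adj b p) (hvp : (φ p).natAbs = x) (hpa : p ≠ a)
    (hrich_a : ∀ m : ℕ, 1 ≤ m → m ≤ k / 2 → m ≠ x →
      (∃ w, G.Adj a w ∧ (φ w).natAbs = m ∧ τ' a w = 1) ∧
      (∃ w, G.Adj a w ∧ (φ w).natAbs = m ∧ τ' a w = -1))
    (hrich_b : ∀ m : ℕ, 1 ≤ m → m ≤ k / 2 → m ≠ x →
      (∃ w, G.Adj b w ∧ (φ w).natAbs = m ∧ τ' b w = 1) ∧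
      (∃ w, G.Adj b w ∧ (φ w).natAbs = m ∧ τ' b w = -1))
    (w₀ : V) (hw₀a : G.Adj b w₀) (hw₀v : (φ w₀).natAbs = 0)
    (hodd : ¬ Even k) :
    ∃ j : ℕ, k ≤ j + 2 ∧ ∃ ψ', IsCompleteColouring G τ' j ψ' := by
  classical
  have hanb : a ≠ b := G.ne_of_adj hab
  have hpb : p ≠ b := fun h => G.irrefl (h ▸ hbp)
  have hw₀b : w₀ ≠ b := fun h => G.irrefl (h ▸ hw₀a)
  set K : ℕ := k / 2 with hK
  have hτ'pm : ∀ u v : V, τ' u v = 1 ∨ τ' u v = -1 := hτ'.2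
  set ψ : V → ℤ := fun v => if v = b then ((K + 1 : ℕ) : ℤ)
      else if (φ v).natAbs = 0 then (-(τ' b v)) * ((K + 1 : ℕ) : ℤ) else φ v with hψ
  have hψb : ψ b = ((K + 1 : ℕ) : ℤ) := by simp [hψ]
  have hψ0 : ∀ v, v ≠ b → (φ v).natAbs = 0 →
      ψ v = (-(τ' b v)) * ((K + 1 : ℕ) : ℤ) := by
    intro v h1 h2; rw [hψ]; beta_reduce; rw [if_neg h1, if_pos h2]
  have hψeq : ∀ v, v ≠ b → (φ v).natAbs ≠ 0 → ψ v = φ v := by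
    intro v h1 h2; rw [hψ]; beta_reduce; rw [if_neg h1, if_neg h2]
  have hnegpm : ∀ v, (-(τ' b v)) = 1 ∨ (-(τ' b v)) = -1 := by
    intro v; rcases hτ'pm b v with h|h <;> rw [h] <;> norm_num
  have habs : ∀ v, (ψ v).natAbs = if v = b then K + 1
      else if (φ v).natAbs = 0 then K + 1 else (φ v).natAbs := by
    intro v
    by_cases h1 : v = b
    · rw [if_pos h1, h1, hψb]; omega
    · rw [if_neg h1]
      by_cases h2 : (φ v).natAbs = 0
      · rw [if_pos h2, hψ0 v h1 h2]
        exact natAbs_mcol _ (hnegpm v) (K+1)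
      · rw [if_neg h2, hψeq v h1 h2]
  -- internal edges
  have hint : ∀ u v, G.Adj u v → ¬((u = a ∧ v = b) ∨ (u = b ∧ v = a)) →
      (φ u).natAbs = x → (φ v).natAbs = x → τ' u v = -1 := by
    intro u v huv hnp hu hv
    have := red_neg_of_proper' (hτ'.2 u v) (hproff u v huv hnp) (by omega)
    rw [← red_of_nonneg τ' φ u v (hφ0 u) (hφ0 v)]
    exact this.1
  have hτ'bp : τ' b p = -1 := by
    apply hint b p hbp _ hxb hvp
    rintro (⟨h1, _⟩ | ⟨_, h2⟩)
    · exact hanb h1.symm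
    · exact hpa h2
  have hτ'a1a : τ' a1 a = -1 := by
    apply hint a1 a ha1a _ hva1 hxa
    rintro (⟨h1, _⟩ | ⟨h1, _⟩)
    · exact (G.ne_of_adj ha1a) h1
    · exact ha1b h1
  -- no internal 0-0 edges
  have hno00 : ∀ u v, G.Adj u v → (φ u).natAbs = 0 → (φ v).natAbs = 0 → False := by
    intro u v huv hu hv
    have hnp : ¬((u = a ∧ v = b) ∨ (u = b ∧ v = a)) := by
      rintro (⟨h1, _⟩ | ⟨_, h2⟩)
      · rw [h1, hxa] at hu; omega
      · rw [h2, hxa] at hv; omega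
    have := hproff u v huv hnp
    have hu0 : φ u = 0 := by omega
    have hv0 : φ v = 0 := by omega
    rw [hu0, hv0, mul_zero] at this
    exact this rfl
  have hψprop : ∀ u v, G.Adj u v → ψ u ≠ τ' u v * ψ v := by
    intro u v huv
    by_cases hub : u = b <;> by_cases hvb : v = b
    · exact absurd (hub ▸ hvb ▸ huv) (G.irrefl)
    · -- u = b
      rw [hub, hψb]
      by_cases hv0 : (φ v).natAbs = 0
      · rw [hψ0 v hvb hv0]
        apply proper_of_red_neg' (hτ'.2 b v)
        · rw [isgn_nonneg _ (by positivity), isgn_mcol _ (hnegpm v) (K+1) (by omega)]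
          rcases hτ'pm b v with h|h <;> rw [h] <;> norm_num
        · positivity
      · rw [hψeq v hvb hv0]
        apply proper_of_natAbs_ne (hτ'.2 b v)
        have h1 : (((K + 1 : ℕ) : ℤ)).natAbs = K + 1 := by omega
        have h2 := (hvalφ v).1
        omega
    · -- v = b
      rw [hvb, hψb]
      by_cases hu0 : (φ u).natAbs = 0
      · rw [hψ0 u hub hu0]
        have huv' : G.Adj u b := hvb ▸ huv
        apply proper_of_red_neg' (hτ'.2 u b)
        · rw [isgn_nonneg _ (by positivity : (0:ℤ) ≤ ((K + 1 : ℕ) : ℤ)),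
            isgn_mcol _ (hnegpm u) (K+1) (by omega)]
          rw [hτ'.1 u b]
          rcases hτ'pm b u with h|h <;> rw [h] <;> norm_num
        · exact mcol_ne_zero _ (hnegpm u) (K+1) (by omega)
      · rw [hψeq u hub hu0]
        apply proper_of_natAbs_ne (hτ'.2 u b)
        have h1 : (((K + 1 : ℕ) : ℤ)).natAbs = K + 1 := by omega
        have h2 := (hvalφ u).1
        omega
    · -- neither is b
      have hnp : ¬((u = a ∧ v = b) ∨ (u = b ∧ v = a)) := by
        rintro (⟨_, h2⟩ | ⟨h1, _⟩)
        · exact hvb h2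
        · exact hub h1
      by_cases hu0 : (φ u).natAbs = 0 <;> by_cases hv0 : (φ v).natAbs = 0
      · exact absurd (hno00 u v huv hu0 hv0) not_false
      · rw [hψ0 u hub hu0, hψeq v hvb hv0]
        apply proper_of_natAbs_ne (hτ'.2 u v)
        rw [natAbs_mcol _ (hnegpm u) (K+1)]
        have h2 := (hvalφ v).1
        omega
      · rw [hψeq u hub hu0, hψ0 v hvb hv0]
        apply proper_of_natAbs_ne (hτ'.2 u v)
        rw [natAbs_mcol _ (hnegpm v) (K+1)]
        have h2 := (hvalφ u).1
        omega
      · rw [hψeq u hub hu0, hψeq v hvb hv0]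
        exact hproff u v huv hnp
  -- red sign helpers
  have hredb : ∀ w, w ≠ b → (φ w).natAbs ≠ 0 → redSign τ' ψ b w = τ' b w := by
    intro w h1 h2
    unfold redSign
    rw [hψb, hψeq w h1 h2, isgn_nonneg _ (by positivity), isgn_nonneg _ (hφ0 w)]; ring
  have hredother : ∀ u w, u ≠ b → w ≠ b → (φ u).natAbs ≠ 0 → (φ w).natAbs ≠ 0 →
      redSign τ' ψ u w = τ' u w := by
    intro u w h1 h2 h3 h4
    unfold redSign
    rw [hψeq u h1 h3, hψeq w h2 h4, isgn_nonneg _ (hφ0 u), isgn_nonneg _ (hφ0 w)]; ring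
  have htrans : ∀ i i' s, i ≠ x → i' ≠ x → i ≠ 0 → i' ≠ 0 →
      HasEdgeType G τ' φ i i' s → HasEdgeType G τ' ψ i i' s := by
    intro i i' s hix hi'x hi0 hi'0 h
    apply hasEdgeType_transfer h
    intro u v _ hu hv
    refine ⟨hψeq u ?_ (by omega), hψeq v ?_ (by omega), rfl⟩
    · intro he; rw [he, hxb] at hu; exact hix hu.symm
    · intro he; rw [he, hxb] at hv; exact hi'x hv.symm
  have harith : (k + 1) / 2 = K + 1 := by
    rw [Nat.even_iff] at hodd; omega
  have heven1 : Even (k + 1) := by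
    rw [Nat.even_iff] at hodd ⊢; omega
  have hxK : x ≤ K := hxk
  -- pair witnesses
  have W_topx : HasEdgeType G τ' ψ (K+1) x 1 ∧ HasEdgeType G τ' ψ (K+1) x (-1) := by
    constructor
    · refine ⟨b, a, G.adj_symm hab, ?_, ?_, ?_⟩
      · rw [habs b, if_pos rfl]
      · rw [habs a, if_neg hanb, if_neg (by omega)]; exact hxa
      · rw [redSign_symm τ' ψ b a (hτ'.1 b a), ← redSign_symm τ' ψ b a (hτ'.1 b a),
          hredb a hanb (by omega), hτ'.1 b a]
        exact hτ'ab
    · refine ⟨b, p, hbp, ?_, ?_, ?_⟩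
      · rw [habs b, if_pos rfl]
      · rw [habs p, if_neg hpb, if_neg (by omega)]; exact hvp
      · rw [hredb p hpb (by omega)]; exact hτ'bp
  have W_topz : ∀ z, 1 ≤ z → z ≤ K → z ≠ x →
      HasEdgeType G τ' ψ (K+1) z 1 ∧ HasEdgeType G τ' ψ (K+1) z (-1) := by
    intro z h1 h2 h3
    obtain ⟨⟨w1, hw1a, hw1v, hw1s⟩, ⟨w2, hw2a, hw2v, hw2s⟩⟩ := hrich_b z h1 h2 h3
    have hw1b : w1 ≠ b := fun h => G.irrefl (h ▸ hw1a)
    have hw2b : w2 ≠ b := fun h => G.irrefl (h ▸ hw2a)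
    constructor
    · refine ⟨b, w1, hw1a, by rw [habs b, if_pos rfl], ?_, ?_⟩
      · rw [habs w1, if_neg hw1b, if_neg (by omega)]; exact hw1v
      · rw [hredb w1 hw1b (by omega)]; exact hw1s
    · refine ⟨b, w2, hw2a, by rw [habs b, if_pos rfl], ?_, ?_⟩
      · rw [habs w2, if_neg hw2b, if_neg (by omega)]; exact hw2v
      · rw [hredb w2 hw2b (by omega)]; exact hw2s
  have W_xz : ∀ z, 1 ≤ z → z ≤ K → z ≠ x →
      HasEdgeType G τ' ψ x z 1 ∧ HasEdgeType G τ' ψ x z (-1) := by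
    intro z h1 h2 h3
    obtain ⟨⟨w1, hw1a, hw1v, hw1s⟩, ⟨w2, hw2a, hw2v, hw2s⟩⟩ := hrich_a z h1 h2 h3
    have hw1b : w1 ≠ b := fun h => h3 (by rw [h, hxb] at hw1v; omega)
    have hw2b : w2 ≠ b := fun h => h3 (by rw [h, hxb] at hw2v; omega)
    constructor
    · refine ⟨a, w1, hw1a, ?_, ?_, ?_⟩
      · rw [habs a, if_neg hanb, if_neg (by omega)]; exact hxa
      · rw [habs w1, if_neg hw1b, if_neg (by omega)]; exact hw1v
      · rw [hredother a w1 hanb hw1b (by omega) (by omega)]; exact hw1s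
    · refine ⟨a, w2, hw2a, ?_, ?_, ?_⟩
      · rw [habs a, if_neg hanb, if_neg (by omega)]; exact hxa
      · rw [habs w2, if_neg hw2b, if_neg (by omega)]; exact hw2v
      · rw [hredother a w2 hanb hw2b (by omega) (by omega)]; exact hw2s
  refine ⟨k + 1, by omega, ψ, buildComplete G τ' (k+1) ψ hψprop ?_ ?_ ?_⟩
  · intro v
    rw [harith, habs v]
    constructor
    · split_ifs with h1 h2
      · omega
      · omega
      · have := (hvalφ v).1; omega
    · intro _
      split_ifs with h1 h2 <;> omega
  · intro i i' hi hi' hi0 hi'0 hne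
    rw [harith] at hi hi'
    have hi0' : i ≠ 0 := hi0 heven1
    have hi'0' : i' ≠ 0 := hi'0 heven1
    by_cases hitop : i = K + 1
    · subst hitop
      by_cases hi'x : i' = x
      · subst hi'x; exact W_topx
      · exact W_topz i' (by omega) (by omega) hi'x
    · by_cases hi'top : i' = K + 1
      · subst hi'top
        by_cases hix : i = x
        · subst hix
          exact ⟨hasEdgeType_symm hτ'.1 W_topx.1, hasEdgeType_symm hτ'.1 W_topx.2⟩
        · obtain ⟨w1, w2⟩ := W_topz i (by omega) (by omega) hix
          exact ⟨hasEdgeType_symm hτ'.1 w1, hasEdgeType_symm hτ'.1 w2⟩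
      · by_cases hix : i = x
        · subst hix
          exact W_xz i' (by omega) (by omega) (by omega)
        · by_cases hi'x : i' = x
          · subst hi'x
            obtain ⟨w1, w2⟩ := W_xz i (by omega) (by omega) hix
            exact ⟨hasEdgeType_symm hτ'.1 w1, hasEdgeType_symm hτ'.1 w2⟩
          · obtain ⟨w1, w2⟩ := hpairs' i i' (by omega) (by omega)
              (fun _ => hi0') (fun _ => hi'0') hne
            exact ⟨htrans i i' 1 hix hi'x hi0' hi'0' w1,
                   htrans i i' (-1) hix hi'x hi0' hi'0' w2⟩
  · intro i h1 hik
    rw [harith] at hik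
    by_cases hitop : i = K + 1
    · subst hitop
      refine ⟨b, w₀, hw₀a, by rw [habs b, if_pos rfl], ?_, ?_⟩
      · rw [habs w₀, if_neg hw₀b, if_pos hw₀v]
      · unfold redSign
        rw [hψb, hψ0 w₀ hw₀b hw₀v, isgn_nonneg _ (by positivity),
          isgn_mcol _ (hnegpm w₀) (K+1) (by omega)]
        rcases hτ'pm b w₀ with h|h <;> rw [h] <;> norm_num
    · by_cases hix : i = x
      · subst hix
        refine ⟨a1, a, ha1a, ?_, ?_, ?_⟩
        · rw [habs a1, if_neg ha1b, if_neg (by omega)]; exact hva1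
        · rw [habs a, if_neg hanb, if_neg (by omega)]; exact hxa
        · rw [hredother a1 a ha1b hanb (by omega) (by omega)]; exact hτ'a1a
      · exact htrans i i (-1) hix hix (by omega) (by omega)
          (hdiag' i h1 (by omega) hix)

/- ===================== the one-step key lemma ===================== -/

lemma keyStep {V : Type*} (G : SimpleGraph V) (σ σ' : V → V → ℤ)
    (hσ : IsSignature σ) (hσ' : IsSignature σ') (a b : V) (hab : G.Adj a b)
    (hflip : σ' a b = -σ a b)
    (hsame : ∀ u v, ¬((u = a ∧ v = b) ∨ (u = b ∧ v = a)) → σ' u v = σ u v)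
    (k : ℕ) (hk : 3 ≤ k) (hadm : AdmitsComplete G σ k) :
    ∃ j, k ≤ j + 2 ∧ AdmitsComplete G σ' j := by
  classical
  obtain ⟨τ, φ, hτsig, ⟨s, hspm, hseq⟩, hφ0, hcomp⟩ := normalizeColouring G σ k hadm
  set τ' : V → V → ℤ := fun u v =>
    if (u = a ∧ v = b) ∨ (u = b ∧ v = a) then -τ u v else τ u v with hτ'def
  have hτ'uv : ∀ u v, τ' u v =
      if (u = a ∧ v = b) ∨ (u = b ∧ v = a) then -τ u v else τ u v := fun u v => rfl
  have hτ'ab : τ' a b = -τ a b := by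
    rw [hτ'uv a b, if_pos (Or.inl ⟨rfl, rfl⟩)]
  have hτ'off : ∀ u v, ¬((u = a ∧ v = b) ∨ (u = b ∧ v = a)) → τ' u v = τ u v := by
    intro u v h; rw [hτ'uv u v, if_neg h]
  have hτ'sig : IsSignature τ' := by
    constructor
    · intro u v
      rw [hτ'uv u v, hτ'uv v u]
      by_cases h : (u = a ∧ v = b) ∨ (u = b ∧ v = a)
      · have h' : (v = a ∧ u = b) ∨ (v = b ∧ u = a) := by tauto
        rw [if_pos h, if_pos h', hτsig.1 u v]
      · have h' : ¬((v = a ∧ u = b) ∨ (v = b ∧ u = a)) := by tauto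
        rw [if_neg h, if_neg h', hτsig.1 u v]
    · intro u v
      rw [hτ'uv u v]
      by_cases h : (u = a ∧ v = b) ∨ (u = b ∧ v = a)
      · rw [if_pos h]; rcases hτsig.2 u v with h'|h' <;> rw [h'] <;> norm_num
      · rw [if_neg h]; exact hτsig.2 u v
  have hSE : SwitchEquiv σ' τ' := by
    refine ⟨s, hspm, fun u v => ?_⟩
    by_cases h : (u = a ∧ v = b) ∨ (u = b ∧ v = a)
    · rcases h with ⟨h1, h2⟩ | ⟨h1, h2⟩
      · rw [h1, h2, hτ'ab, hseq a b, hflip]; ring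
      · rw [h1, h2]
        have h3 : τ' b a = -τ b a := by
          rw [hτ'uv b a, if_pos (Or.inr ⟨rfl, rfl⟩)]
        have h4 : σ' b a = -σ b a := by
          rw [hσ'.1 b a, hflip, hσ.1 a b]
        rw [h3, hseq b a, h4]; ring
    · rw [hτ'off u v h, hseq u v, hsame u v h]
  have hprop := hcomp.1.2
  have hvalφ : ∀ v, (φ v).natAbs ≤ k / 2 ∧ (Even k → (φ v).natAbs ≠ 0) := by
    intro v
    have := hcomp.1.1 v
    rw [mem_colourSet_iff] at this
    exact ⟨this.1, fun he => by have := this.2 he; omega⟩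
  have hproff : ∀ u v, G.Adj u v → ¬((u = a ∧ v = b) ∨ (u = b ∧ v = a)) →
      φ u ≠ τ' u v * φ v := by
    intro u v huv h; rw [hτ'off u v h]; exact hprop u v huv
  have hpairsτ : ∀ i i' : ℕ, i ≤ k / 2 → i' ≤ k / 2 → (Even k → i ≠ 0) →
      (Even k → i' ≠ 0) → i ≠ i' →
      HasEdgeType G τ φ i i' 1 ∧ HasEdgeType G τ φ i i' (-1) := by
    intro i i' h1 h2 h3 h4 h5
    exact hcomp.2.1 i i' ((coe_mem_colourSet_iff k i).mpr ⟨h1, h3⟩)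
      ((coe_mem_colourSet_iff k i').mpr ⟨h2, h4⟩) h5
  have hdiagτ : ∀ i : ℕ, 1 ≤ i → i ≤ k / 2 → HasEdgeType G τ φ i i (-1) := by
    intro i h1 h2
    exact hcomp.2.2 i h1 ((coe_mem_colourSet_iff k i).mpr ⟨h2, fun _ => by omega⟩)
  set x := (φ a).natAbs with hxdef
  set y := (φ b).natAbs with hydef
  have hxk : x ≤ k / 2 := (hvalφ a).1
  have hyk : y ≤ k / 2 := (hvalφ b).1
  by_cases hxy : x = y
  · -- CASE D
    have hred := red_neg_of_proper' (hτsig.2 a b) (hprop a b hab) (by omega)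
    have hτab : τ a b = -1 := by
      rw [← red_of_nonneg τ φ a b (hφ0 a) (hφ0 b)]
      exact hred.1
    have hx1 : 1 ≤ x := by
      have := hred.2; omega
    have hτ'ab1 : τ' a b = 1 := by rw [hτ'ab, hτab]; norm_num
    -- transfers of all old types except the diagonal at x
    have htransD : ∀ i i' s, ¬(i = x ∧ i' = x) →
        HasEdgeType G τ φ i i' s → HasEdgeType G τ' φ i i' s := by
      intro i i' s hexc h
      apply hasEdgeType_transfer h
      intro u v _ hu hv
      refine ⟨rfl, rfl, hτ'off u v ?_⟩
      rintro (⟨h1, h2⟩ | ⟨h1, h2⟩)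
      · rw [h1] at hu; rw [h2] at hv
        exact hexc ⟨by omega, by omega⟩
      · rw [h1] at hu; rw [h2] at hv
        exact hexc ⟨by omega, by omega⟩
    have hpairs' : ∀ i i' : ℕ, i ≤ k / 2 → i' ≤ k / 2 → (Even k → i ≠ 0) →
        (Even k → i' ≠ 0) → i ≠ i' →
        HasEdgeType G τ' φ i i' 1 ∧ HasEdgeType G τ' φ i i' (-1) := by
      intro i i' h1 h2 h3 h4 h5
      obtain ⟨w1, w2⟩ := hpairsτ i i' h1 h2 h3 h4 h5
      have hexc : ¬(i = x ∧ i' = x) := by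
        rintro ⟨e1, e2⟩; exact h5 (e1 ▸ e2 ▸ rfl)
      exact ⟨htransD i i' 1 hexc w1, htransD i i' (-1) hexc w2⟩
    have hdiag' : ∀ i : ℕ, 1 ≤ i → i ≤ k / 2 → i ≠ x →
        HasEdgeType G τ' φ i i (-1) := by
      intro i h1 h2 h3
      exact htransD i i (-1) (by tauto) (hdiagτ i h1 h2)
    set R : V → V → Prop := fun u v => G.Adj u v ∧ (φ u).natAbs = x ∧
        (φ v).natAbs = x ∧ ¬((u = a ∧ v = b) ∨ (u = b ∧ v = a)) with hRdef
    have hkey : ∃ j : ℕ, k ≤ j + 2 ∧ ∃ ψ', IsCompleteColouring G τ' j ψ' := by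
      by_cases hreach : Relation.ReflTransGen R b a
      · -- connected case
        -- extract p : internal neighbour of b distinct from a
        obtain ⟨p, hRbp⟩ : ∃ p, R b p := by
          rcases Relation.ReflTransGen.cases_head hreach with h | ⟨p, h1, _⟩
          · exact absurd h.symm (G.ne_of_adj hab)
          · exact ⟨p, h1⟩
        have hbp : G.Adj b p := hRbp.1
        have hvp : (φ p).natAbs = x := hRbp.2.2.1
        have hpa : p ≠ a := by
          intro h; exact hRbp.2.2.2 (Or.inr ⟨rfl, h⟩)
        -- target property
        by_cases hTb : ∃ m : ℕ, m ≤ k / 2 ∧ m ≠ x ∧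
            ((1 ≤ m ∧ ∃ c : ℤ, (c = 1 ∨ c = -1) ∧
              ∀ w, G.Adj b w → (φ w).natAbs = m → τ' b w = c) ∨
             (m = 0 ∧ ¬ Even k ∧ ∀ w, G.Adj b w → (φ w).natAbs ≠ 0))
        · obtain ⟨m, hm1, hm2, hm3⟩ := hTb
          exact caseD2 G τ' hτ'sig k x hk hx1 hxk φ hφ0 hvalφ a b hab rfl (by omega)
            hproff hpairs' hdiag' hreach m hm1 hm2 hm3
        · by_cases hTa : ∃ m : ℕ, m ≤ k / 2 ∧ m ≠ x ∧
              ((1 ≤ m ∧ ∃ c : ℤ, (c = 1 ∨ c = -1) ∧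
                ∀ w, G.Adj a w → (φ w).natAbs = m → τ' a w = c) ∨
               (m = 0 ∧ ¬ Even k ∧ ∀ w, G.Adj a w → (φ w).natAbs ≠ 0))
          · -- swap roles of a and b
            obtain ⟨m, hm1, hm2, hm3⟩ := hTa
            have hproff' : ∀ u v, G.Adj u v → ¬((u = b ∧ v = a) ∨ (u = a ∧ v = b)) →
                φ u ≠ τ' u v * φ v := by
              intro u v huv h; exact hproff u v huv (by tauto)
            have hreach' : Relation.ReflTransGen
                (fun u v => G.Adj u v ∧ (φ u).natAbs = x ∧ (φ v).natAbs = x ∧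
                  ¬((u = b ∧ v = a) ∨ (u = a ∧ v = b))) a b := by
              have hs : Relation.ReflTransGen R a b := by
                apply rtg_symm _ hreach
                intro u v hR
                exact ⟨G.adj_symm hR.1, hR.2.2.1, hR.2.1, by
                  have := hR.2.2.2; tauto⟩
              refine Relation.ReflTransGen.mono ?_ _ _ hs
              intro u v hR
              exact ⟨hR.1, hR.2.1, hR.2.2.1, by have := hR.2.2.2; tauto⟩
            exact caseD2 G τ' hτ'sig k x hk hx1 hxk φ hφ0 hvalφ b a (G.adj_symm hab)
              (by omega) rfl hproff' hpairs' hdiag' hreach' m hm1 hm2 hm3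
          · -- both rich : case D3
            obtain ⟨a1, ha1R⟩ : ∃ a1, R a1 a := by
              rcases Relation.ReflTransGen.cases_tail hreach with h | ⟨c', _, hR⟩
              · exact absurd h (G.ne_of_adj hab)
              · exact ⟨c', hR⟩
            have ha1a : G.Adj a1 a := ha1R.1
            have hva1 : (φ a1).natAbs = x := ha1R.2.1
            have ha1b : a1 ≠ b := fun h => ha1R.2.2.2 (Or.inr ⟨h, rfl⟩)
            have hrich : ∀ (v₀ : V), (¬ ∃ m : ℕ, m ≤ k / 2 ∧ m ≠ x ∧
                ((1 ≤ m ∧ ∃ c : ℤ, (c = 1 ∨ c = -1) ∧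
                  ∀ w, G.Adj v₀ w → (φ w).natAbs = m → τ' v₀ w = c) ∨
                 (m = 0 ∧ ¬ Even k ∧ ∀ w, G.Adj v₀ w → (φ w).natAbs ≠ 0))) →
                ∀ m : ℕ, 1 ≤ m → m ≤ k / 2 → m ≠ x →
                (∃ w, G.Adj v₀ w ∧ (φ w).natAbs = m ∧ τ' v₀ w = 1) ∧
                (∃ w, G.Adj v₀ w ∧ (φ w).natAbs = m ∧ τ' v₀ w = -1) := by
              intro v₀ hT m h1 h2 h3
              constructor
              · by_contra hno
                apply hT
                refine ⟨m, h2, h3, Or.inl ⟨h1, -1, Or.inr rfl, ?_⟩⟩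
                intro w hw hwv
                rcases hτ'sig.2 v₀ w with h|h
                · exfalso; exact hno ⟨w, hw, hwv, h⟩
                · exact h
              · by_contra hno
                apply hT
                refine ⟨m, h2, h3, Or.inl ⟨h1, 1, Or.inl rfl, ?_⟩⟩
                intro w hw hwv
                rcases hτ'sig.2 v₀ w with h|h
                · exact h
                · exfalso; exact hno ⟨w, hw, hwv, h⟩
            by_cases heven : Even k
            · exact caseD3even G τ' hτ'sig k x hk hx1 hxk φ hφ0 hvalφ a b hab rfl
                (by omega) hτ'ab1 hproff hpairs' hdiag' a1 ha1a hva1 ha1b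
                p hbp hvp hpa (hrich a hTa) (hrich b hTb) heven
            · obtain ⟨w₀, hw₀a, hw₀v⟩ : ∃ w₀, G.Adj b w₀ ∧ (φ w₀).natAbs = 0 := by
                by_contra hno
                push_neg at hno
                apply hTb
                refine ⟨0, by omega, by omega, Or.inr ⟨rfl, heven, ?_⟩⟩
                intro w hw
                exact hno w hw
              exact caseD3odd G τ' hτ'sig k x hk hx1 hxk φ hφ0 hvalφ a b hab rfl
                (by omega) hτ'ab1 hproff hpairs' hdiag' a1 ha1a hva1 ha1b
                p hbp hvp hpa (hrich a hTa) (hrich b hTb) w₀ hw₀a hw₀v heven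
      · exact caseD1 G τ' hτ'sig k x hk hx1 hxk φ hφ0 hvalφ a b hab rfl (by omega)
          hτ'ab1 hproff hpairs' hdiag' hreach
    obtain ⟨j, hj1, ψ', hψ'⟩ := hkey
    exact ⟨j, hj1, τ', hτ'sig, hSE, ψ', hψ'⟩
  · -- CASE C : the ends of ab get different values ; φ remains proper
    have hpropC : ∀ u v, G.Adj u v → φ u ≠ τ' u v * φ v := by
      intro u v huv
      by_cases h : (u = a ∧ v = b) ∨ (u = b ∧ v = a)
      · rcases h with ⟨h1, h2⟩ | ⟨h1, h2⟩
        · rw [h1, h2]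
          exact proper_of_natAbs_ne (hτ'sig.2 a b) (by omega)
        · rw [h1, h2]
          exact proper_of_natAbs_ne (hτ'sig.2 b a) (by omega)
      · exact hproff u v huv h
    set xh : ℕ := if x = 0 then y else x with hxh
    have hxh1 : 1 ≤ xh := by rw [hxh]; split <;> omega
    have hxhk : xh ≤ k / 2 := by rw [hxh]; split <;> omega
    have htransC : ∀ i i' s, ¬(i = x ∧ i' = y) → ¬(i = y ∧ i' = x) →
        HasEdgeType G τ φ i i' s → HasEdgeType G τ' φ i i' s := by
      intro i i' s hexc1 hexc2 h
      apply hasEdgeType_transfer h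
      intro u v _ hu hv
      refine ⟨rfl, rfl, hτ'off u v ?_⟩
      rintro (⟨h1, h2⟩ | ⟨h1, h2⟩)
      · rw [h1] at hu; rw [h2] at hv
        exact hexc1 ⟨hu.symm, hv.symm⟩
      · rw [h1] at hu; rw [h2] at hv
        exact hexc2 ⟨hu.symm, hv.symm⟩
    have hkey : ∃ j : ℕ, k ≤ j + 2 ∧ ∃ ψ', IsCompleteColouring G τ' j ψ' := by
      apply finishLemma G τ' hτ'sig k hk xh hxh1 hxhk φ hvalφ hpropC
      · intro i i' h1 h2 h3 h4 h5 h6 h7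
        obtain ⟨w1, w2⟩ := hpairsτ i i' h1 h2 h3 h4 h5
        have hexc1 : ¬(i = x ∧ i' = y) := by
          rw [hxh] at h6 h7; rintro ⟨e1, e2⟩
          by_cases h0 : x = 0
          · rw [if_pos h0] at h7; exact h7 e2
          · rw [if_neg h0] at h6; exact h6 e1
        have hexc2 : ¬(i = y ∧ i' = x) := by
          rw [hxh] at h6 h7; rintro ⟨e1, e2⟩
          by_cases h0 : x = 0
          · rw [if_pos h0] at h6; exact h6 e1
          · rw [if_neg h0] at h7; exact h7 e2
        exact ⟨htransC i i' 1 hexc1 hexc2 w1, htransC i i' (-1) hexc1 hexc2 w2⟩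
      · intro i h1 h2 _
        refine htransC i i (-1) ?_ ?_ (hdiagτ i h1 h2) <;>
          · rintro ⟨e1, e2⟩; exact hxy (e1 ▸ e2 ▸ rfl)
      · refine htransC xh xh (-1) ?_ ?_ (hdiagτ xh hxh1 hxhk) <;>
          · rintro ⟨e1, e2⟩; exact hxy (e1 ▸ e2 ▸ rfl)
    obtain ⟨j, hj1, ψ', hψ'⟩ := hkey
    exact ⟨j, hj1, τ', hτ'sig, hSE, ψ', hψ'⟩

/- ===================== boundedness ===================== -/

lemma admits_bound {V : Type*} [Fintype V] (G : SimpleGraph V) (σ : V → V → ℤ) (k : ℕ)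
    (h : AdmitsComplete G σ k) : k ≤ 2 * Fintype.card V + 1 := by
  obtain ⟨σ₁, _, _, φ, hcomp⟩ := h
  have hwit : ∀ i : ℕ, 1 ≤ i → i ≤ k / 2 → ∃ v, (φ v).natAbs = i := by
    intro i h1 h2
    obtain ⟨u, _, _, h3, _, _⟩ := hcomp.2.2 i h1
      ((coe_mem_colourSet_iff k i).mpr ⟨h2, fun _ => by omega⟩)
    exact ⟨u, h3⟩
  by_contra hbig
  push_neg at hbig
  have hhalf : Fintype.card V + 1 ≤ k / 2 := by omega
  have : ∀ i : Fin (k / 2), ∃ v, (φ v).natAbs = (i : ℕ) + 1 := by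
    intro ⟨i, hi⟩
    exact hwit (i + 1) (by omega) (by omega)
  choose g hg using this
  have hginj : Function.Injective g := by
    intro i1 i2 he
    have h1 := hg i1
    have h2 := hg i2
    rw [he] at h1
    ext
    omega
  have := Fintype.card_le_of_injective g hginj
  rw [Fintype.card_fin] at this
  omega

/- ===================== main inequality ===================== -/

lemma psi_le {V : Type*} [Fintype V] (G : SimpleGraph V) (σ σ' : V → V → ℤ)
    (hσ : IsSignature σ) (hσ' : IsSignature σ') (a b : V) (hab : G.Adj a b)
    (hflip : σ' a b = -σ a b)
    (hsame : ∀ u v, ¬((u = a ∧ v = b) ∨ (u = b ∧ v = a)) → σ' u v = σ u v) :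
    psi G σ ≤ psi G σ' + 2 := by
  have hbdd : BddAbove {k | AdmitsComplete G σ' k} :=
    ⟨2 * Fintype.card V + 1, fun k hk => admits_bound G σ' k hk⟩
  show sSup {k | AdmitsComplete G σ k} ≤ psi G σ' + 2
  apply csSup_le'
  intro k hk
  simp only [Set.mem_setOf_eq] at hk
  by_cases hk3 : 3 ≤ k
  · obtain ⟨j, hj1, hj2⟩ := keyStep G σ σ' hσ hσ' a b hab hflip hsame k hk3 hk
    have : j ≤ psi G σ' := le_csSup hbdd hj2
    omega
  · omega

/-- If `(G,σ')` is obtained from `(G,σ)` by changing the sign of a single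
edge, then `ψ(G,σ) − 2 ≤ ψ(G,σ') ≤ ψ(G,σ) + 2`. -/
theorem statement10 {V : Type*} [Fintype V] (G : SimpleGraph V) (σ σ' : V → V → ℤ)
    (hσ : IsSignature σ) (hσ' : IsSignature σ') (a b : V) (hab : G.Adj a b)
    (hflip : σ' a b = -σ a b)
    (hsame : ∀ u v, ¬((u = a ∧ v = b) ∨ (u = b ∧ v = a)) → σ' u v = σ u v) :
    psi G σ - 2 ≤ psi G σ' ∧ psi G σ' ≤ psi G σ + 2 := by
  constructor
  · have := psi_le G σ σ' hσ hσ' a b hab hflip hsame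
    omega
  · have := psi_le G σ' σ hσ' hσ a b hab (by rw [hflip, neg_neg])
      (fun u v h => (hsame u v h).symm)
    omega
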